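/- arXiv:2310.01751 — 14 statements merged into one kernel-verified Lean document; each statement's English description precedes it below -/
import Mathlib

section
/- Assume each ∇f_j is Lipschitz continuous and each B_j is symmetric positive definite. If x ∈ ℝⁿ is not a critical point of F, i.e., there exists d̃ ∈ ℝⁿ with F_j′(x; d̃) < 0 for all j ∈ {1,…,m}, then θ(x) < 0. -/
open Filter Topology
open scoped RealInnerProductSpace BigOperators

noncomputable section

namespace NPQN

variable {n m : ℕ}

/-- The quadratic form `⟨d, B d⟩` of a matrix `B` acting on Euclidean space. -/
def mquad (B : Matrix (Fin n) (Fin n) ℝ) (d : EuclideanSpace ℝ (Fin n)) : ℝ :=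
  ⟪d, Matrix.toEuclideanLin B d⟫

/-- `B ⪰ σ I`, i.e. `⟨d, B d⟩ ≥ σ‖d‖²` for all `d`. -/
def MatGE (B : Matrix (Fin n) (Fin n) ℝ) (σ : ℝ) : Prop :=
  ∀ d : EuclideanSpace ℝ (Fin n), σ * ‖d‖ ^ 2 ≤ mquad B d

/-- `Q_j(x,d) = ⟨∇f_j(x), d⟩ + (1/2)⟨d, B_j d⟩ + g_j(x+d) − g_j(x)`. -/
def Qj (f g : Fin m → EuclideanSpace ℝ (Fin n) → ℝ)
    (B : Fin m → Matrix (Fin n) (Fin n) ℝ) (x d : EuclideanSpace ℝ (Fin n)) (j : Fin m) : ℝ :=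
  ⟪gradient (f j) x, d⟫ + (1 / 2) * mquad (B j) d + g j (x + d) - g j x

/-- `Q(x,d) = max_j Q_j(x,d)`. -/
def Qmax (f g : Fin m → EuclideanSpace ℝ (Fin n) → ℝ)
    (B : Fin m → Matrix (Fin n) (Fin n) ℝ) (x d : EuclideanSpace ℝ (Fin n)) : ℝ :=
  ⨆ j, Qj f g B x d j

/-- `θ(x) = inf_d Q(x,d)`. -/
def theta (f g : Fin m → EuclideanSpace ℝ (Fin n) → ℝ)
    (B : Fin m → Matrix (Fin n) (Fin n) ℝ) (x : EuclideanSpace ℝ (Fin n)) : ℝ :=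
  ⨅ d, Qmax f g B x d

/-- One-sided directional derivative. -/
def HasDirDeriv (F : EuclideanSpace ℝ (Fin n) → ℝ) (x d : EuclideanSpace ℝ (Fin n)) (c : ℝ) : Prop :=
  Tendsto (fun t : ℝ => (F (x + t • d) - F x) / t) (𝓝[>] (0 : ℝ)) (𝓝 c)

/-- `x` is a critical point of `F = (F_1,…,F_m)`. -/
def IsCriticalPt (F : Fin m → EuclideanSpace ℝ (Fin n) → ℝ) (x : EuclideanSpace ℝ (Fin n)) : Prop :=
  ¬ ∃ d : EuclideanSpace ℝ (Fin n), ∀ j, ∃ c : ℝ, HasDirDeriv (F j) x d c ∧ c < 0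

/-- `ξ` is a subgradient of `g` at `y`. -/
def IsSubgradAt (g : EuclideanSpace ℝ (Fin n) → ℝ) (y ξ : EuclideanSpace ℝ (Fin n)) : Prop :=
  ∀ z, g y + ⟪ξ, z - y⟫ ≤ g z

/-- Hessian of `f` as the derivative of the gradient. -/
def hess (f : EuclideanSpace ℝ (Fin n) → ℝ) (z : EuclideanSpace ℝ (Fin n)) :
    EuclideanSpace ℝ (Fin n) →L[ℝ] EuclideanSpace ℝ (Fin n) :=
  fderiv ℝ (fun y => gradient f y) z

lemma mquad_smul (B : Matrix (Fin n) (Fin n) ℝ) (t : ℝ) (d : EuclideanSpace ℝ (Fin n)) :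
    mquad B (t • d) = t ^ 2 * mquad B d := by
  unfold mquad
  rw [map_smul, real_inner_smul_left, real_inner_smul_right]
  ring

lemma mquad_cont (B : Matrix (Fin n) (Fin n) ℝ) : Continuous (mquad B) := by
  have h : Continuous (fun d : EuclideanSpace ℝ (Fin n) => (Matrix.toEuclideanLin B) d) :=
    (Matrix.toEuclideanLin B).continuous_of_finiteDimensional
  exact continuous_id.inner h

lemma slope_tendsto (f : EuclideanSpace ℝ (Fin n) → ℝ) (hf : ContDiff ℝ 1 f)
    (x d : EuclideanSpace ℝ (Fin n)) :
    Tendsto (fun t : ℝ => (f (x + t • d) - f x) / t) (𝓝[>] (0 : ℝ))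
      (𝓝 ⟪gradient f x, d⟫) := by
  have hfd : HasFDerivAt f (fderiv ℝ f x) x :=
    (hf.differentiable one_ne_zero x).hasFDerivAt
  have hcomp : HasDerivAt (fun t : ℝ => f (x + t • d)) (fderiv ℝ f x d) 0 := by
    have hfd' : HasFDerivAt f (fderiv ℝ f x) ((0:ℝ) • d + x) := by simpa using hfd
    have hcurve' : HasDerivAt (fun t : ℝ => t • d + x) d 0 := by
      simpa using ((hasDerivAt_id (0 : ℝ)).smul_const d).add_const x
    have := hfd'.comp_hasDerivAt (0:ℝ) hcurve'
    simp only [add_comm] at this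
    exact this
  have hval : (fderiv ℝ f x) d = ⟪gradient f x, d⟫ := by
    rw [gradient, InnerProductSpace.toDual_symm_apply]
  rw [← hval]
  have := (hasDerivAt_iff_tendsto_slope).mp hcomp
  have h2 : Tendsto (slope (fun t : ℝ => f (x + t • d)) 0) (𝓝[>] (0:ℝ)) (𝓝 ((fderiv ℝ f x) d)) :=
    this.mono_left (nhdsWithin_mono _ (fun t ht => ne_of_gt ht))
  refine h2.congr' ?_
  filter_upwards [self_mem_nhdsWithin] with t ht
  simp [slope_def_field, div_eq_inv_mul]


set_option maxHeartbeats 1000000 in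
/-- Assume each `∇f_j` is Lipschitz continuous and each `B_j` is symmetric
positive definite. If `x` is not a critical point of `F`, i.e. there exists `d̃` with
`F_j′(x; d̃) < 0` for all `j`, then `θ(x) < 0`. -/
theorem theta_neg_of_noncritical
    (n m : ℕ) (hn : 1 ≤ n) (hm : 1 ≤ m)
    (f g : Fin m → EuclideanSpace ℝ (Fin n) → ℝ)
    (hfconv : ∀ j, ConvexOn ℝ Set.univ (f j))
    (hfdiff : ∀ j, ContDiff ℝ 1 (f j))
    (hLip : ∀ j, ∃ L : NNReal, LipschitzWith L (fun y => gradient (f j) y))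
    (hgconv : ∀ j, ConvexOn ℝ Set.univ (g j))
    (hgcont : ∀ j, Continuous (g j))
    (B : Fin m → Matrix (Fin n) (Fin n) ℝ)
    (hBsymm : ∀ j, (B j).IsSymm)
    (hBpd : ∀ j, ∀ v : EuclideanSpace ℝ (Fin n), v ≠ 0 → 0 < mquad (B j) v)
    (x : EuclideanSpace ℝ (Fin n))
    (hnc : ∃ dt : EuclideanSpace ℝ (Fin n), ∀ j, ∃ c : ℝ,
      HasDirDeriv (fun y => f j y + g j y) x dt c ∧ c < 0) :
    theta f g B x < 0 := by
  haveI : Nonempty (Fin m) := ⟨⟨0, hm⟩⟩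
  obtain ⟨dt, hdt⟩ := hnc
  choose c hc hcneg using hdt
  set j0 : Fin m := ⟨0, hm⟩
  -- Step 1 : Qmax is bounded below.
  -- minimal eigenvalue of B j0
  set v : EuclideanSpace ℝ (Fin n) := EuclideanSpace.single (⟨0, hn⟩ : Fin n) (1:ℝ) with hvdef
  have hvnorm : ‖v‖ = 1 := by simp [hvdef]
  have hvmem : v ∈ Metric.sphere (0 : EuclideanSpace ℝ (Fin n)) 1 := by
    simp [mem_sphere_iff_norm, hvnorm]
  obtain ⟨u0, hu0mem, hu0min⟩ := (isCompact_sphere (0 : EuclideanSpace ℝ (Fin n)) 1).exists_isMinOn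
    ⟨v, hvmem⟩ ((mquad_cont (B j0)).continuousOn)
  have hu0norm : ‖u0‖ = 1 := by simpa [mem_sphere_iff_norm] using hu0mem
  set σ : ℝ := mquad (B j0) u0 with hσdef
  have hσpos : 0 < σ := hBpd j0 u0 (by intro h; rw [h] at hu0norm; simp at hu0norm)
  have hge : ∀ d : EuclideanSpace ℝ (Fin n), σ * ‖d‖ ^ 2 ≤ mquad (B j0) d := by
    intro d
    rcases eq_or_ne d 0 with rfl | hd0
    · simp [mquad]
    · have hdpos : (0:ℝ) < ‖d‖ := norm_pos_iff.2 hd0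
      set u : EuclideanSpace ℝ (Fin n) := ‖d‖⁻¹ • d with hudef
      have humem : u ∈ Metric.sphere (0 : EuclideanSpace ℝ (Fin n)) 1 := by
        simp [hudef, mem_sphere_iff_norm, norm_smul, abs_of_pos (inv_pos.2 hdpos),
          inv_mul_cancel₀ (ne_of_gt hdpos)]
      have hdu : d = ‖d‖ • u := by
        rw [hudef, smul_smul, mul_inv_cancel₀ (ne_of_gt hdpos), one_smul]
      have hmin : σ ≤ mquad (B j0) u := hu0min humem
      have heq : mquad (B j0) d = ‖d‖ ^ 2 * mquad (B j0) u := by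
        conv_lhs => rw [hdu]
        rw [mquad_smul]
      nlinarith [sq_nonneg ‖d‖, hmin, heq]
  clear hσdef
  clear_value σ
  -- bound on g-increments on the unit ball
  set h : EuclideanSpace ℝ (Fin n) → ℝ := fun d => g j0 (x + d) - g j0 x with hhdef
  have hhcont : Continuous h := ((hgcont j0).comp (continuous_const.add continuous_id)).sub continuous_const
  obtain ⟨w, hwmem, hwmax⟩ := (isCompact_closedBall (0 : EuclideanSpace ℝ (Fin n)) 1).exists_isMaxOn
    ⟨0, by simp⟩ (hhcont.abs.continuousOn)
  set C : ℝ := |h w| with hCdef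
  have hC0 : 0 ≤ C := abs_nonneg _
  have hball : ∀ d : EuclideanSpace ℝ (Fin n), ‖d‖ ≤ 1 → -C ≤ h d := by
    intro d hd
    have hmb : |h d| ≤ C := hwmax (by simpa [Metric.mem_closedBall, dist_eq_norm] using hd : d ∈ Metric.closedBall (0 : EuclideanSpace ℝ (Fin n)) 1)
    have := neg_abs_le (h d)
    linarith
  clear hCdef
  clear_value C
  have hlow : ∀ d : EuclideanSpace ℝ (Fin n), -(C * (1 + ‖d‖)) ≤ h d := by
    intro d
    rcases le_or_gt ‖d‖ 1 with hle | hgt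
    · have := hball d hle
      have hn0 : (0:ℝ) ≤ ‖d‖ := norm_nonneg _
      nlinarith
    · set t : ℝ := ‖d‖ with htdef
      have htpos : (0:ℝ) < t := lt_trans one_pos hgt
      set u : EuclideanSpace ℝ (Fin n) := t⁻¹ • d with hudef
      have hunorm : ‖u‖ = 1 := by
        rw [hudef, norm_smul, Real.norm_eq_abs, abs_of_pos (inv_pos.2 htpos)]
        exact inv_mul_cancel₀ (ne_of_gt htpos)
      have hcomb : (x + u) = t⁻¹ • (x + d) + (1 - t⁻¹) • x := by
        rw [hudef]; module
      have ha0 : (0:ℝ) ≤ t⁻¹ := le_of_lt (inv_pos.2 htpos)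
      have hb0 : (0:ℝ) ≤ 1 - t⁻¹ := by
        have : t⁻¹ ≤ 1 := inv_le_one_iff₀.mpr (Or.inr (le_of_lt hgt))
        linarith
      have hab : t⁻¹ + (1 - t⁻¹) = 1 := by ring
      have hconv := (hgconv j0).2 (Set.mem_univ (x + d)) (Set.mem_univ x) ha0 hb0 hab
      rw [← hcomb] at hconv
      -- h u ≤ t⁻¹ * h d
      have hu_le : h u ≤ t⁻¹ * h d := by
        have : g j0 (x + u) ≤ t⁻¹ * g j0 (x + d) + (1 - t⁻¹) * g j0 x := by
          simpa [smul_eq_mul] using hconv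
        rw [hhdef]
        simp only
        nlinarith
      have hbu : -C ≤ h u := hball u (le_of_eq hunorm)
      have : -C ≤ t⁻¹ * h d := le_trans hbu hu_le
      have h1 : -(C * t) ≤ h d := by
        have h2 : t * (-C) ≤ t * (t⁻¹ * h d) := mul_le_mul_of_nonneg_left this (le_of_lt htpos)
        rw [← mul_assoc, mul_inv_cancel₀ (ne_of_gt htpos), one_mul] at h2
        linarith
      nlinarith
  -- lower bound for Qmax
  set a : EuclideanSpace ℝ (Fin n) := gradient (f j0) x with hadef
  set b : ℝ := -((‖a‖ + C) ^ 2 / (2 * σ)) - C with hbdef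
  clear_value a b
  have hQlb : ∀ d : EuclideanSpace ℝ (Fin n), b ≤ Qmax f g B x d := by
    intro d
    have h1 : b ≤ Qj f g B x d j0 := by
      have hinner : -(‖a‖ * ‖d‖) ≤ ⟪a, d⟫ := by
        have := abs_real_inner_le_norm a d
        have := neg_abs_le (⟪a, d⟫ : ℝ)
        linarith
      have hq : σ * ‖d‖ ^ 2 ≤ mquad (B j0) d := hge d
      have hh : -(C * (1 + ‖d‖)) ≤ h d := hlow d
      have hdn : (0:ℝ) ≤ ‖d‖ := norm_nonneg _
      have h2σ : (0:ℝ) < 2 * σ := by linarith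
      have hdiv : (‖a‖ + C) ^ 2 / (2 * σ) * (2 * σ) = (‖a‖ + C) ^ 2 :=
        div_mul_cancel₀ _ (ne_of_gt h2σ)
      have key : -((‖a‖ + C) ^ 2 / (2 * σ)) ≤ (σ/2) * ‖d‖^2 - (‖a‖ + C) * ‖d‖ := by
        nlinarith [sq_nonneg (σ * ‖d‖ - (‖a‖ + C)), hσpos, hdiv]
      have hhd : h d = g j0 (x + d) - g j0 x := rfl
      rw [hbdef]
      simp only [Qj]
      rw [← hadef]
      linarith [hhd, hh, hinner, hq, key]
    calc b ≤ Qj f g B x d j0 := h1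
      _ ≤ Qmax f g B x d := le_ciSup (Set.Finite.bddAbove (Set.finite_range _)) j0
  have hbdd : BddBelow (Set.range (Qmax f g B x)) := ⟨b, by rintro y ⟨d, rfl⟩; exact hQlb d⟩
  -- Step 2 : find d0 with Qmax x d0 < 0
  have hTj : ∀ j, Tendsto (fun t : ℝ => Qj f g B x (t • dt) j / t) (𝓝[>] (0:ℝ)) (𝓝 (c j)) := by
    intro j
    have hA := slope_tendsto (f j) (hfdiff j) x dt
    have hq : Tendsto (fun t : ℝ => (t/2) * mquad (B j) dt) (𝓝[>] (0:ℝ)) (𝓝 0) := by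
      have h0 : Tendsto (fun t : ℝ => t/2) (𝓝 (0:ℝ)) (𝓝 (0/2)) := tendsto_id.div_const 2
      rw [zero_div] at h0
      have h2 : Tendsto (fun t : ℝ => (t/2) * mquad (B j) dt) (𝓝[>] (0:ℝ))
          (𝓝 (0 * mquad (B j) dt)) :=
        (h0.mono_left nhdsWithin_le_nhds).mul_const _
      rw [zero_mul] at h2
      exact h2
    have hconst : Tendsto (fun _ : ℝ => (⟪gradient (f j) x, dt⟫ : ℝ)) (𝓝[>] (0:ℝ))
        (𝓝 ⟪gradient (f j) x, dt⟫) := tendsto_const_nhds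
    have hcomb := (hc j).add ((hconst.add hq).sub hA)
    have hlim : c j + (⟪gradient (f j) x, dt⟫ + 0 - ⟪gradient (f j) x, dt⟫) = c j := by ring
    rw [hlim] at hcomb
    refine hcomb.congr' ?_
    filter_upwards [self_mem_nhdsWithin] with t ht
    have htne : t ≠ 0 := ne_of_gt ht
    simp only [Qj, real_inner_smul_right, mquad_smul]
    field_simp
    ring
  have hev : ∀ᶠ t : ℝ in 𝓝[>] (0:ℝ), ∀ j, Qj f g B x (t • dt) j / t < 0 :=
    eventually_all.2 fun j => (hTj j).eventually_lt_const (hcneg j)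
  obtain ⟨t0, hev0, ht0pos⟩ := (hev.and self_mem_nhdsWithin).exists
  have hQneg : ∀ j, Qj f g B x (t0 • dt) j < 0 := by
    intro j
    have := hev0 j
    have ht0 : (0:ℝ) < t0 := ht0pos
    have := mul_neg_of_pos_of_neg ht0 this
    rwa [mul_div_cancel₀ _ (ne_of_gt ht0)] at this
  have hQmaxNeg : Qmax f g B x (t0 • dt) < 0 := by
    obtain ⟨j, hj⟩ := exists_eq_ciSup_of_finite (f := fun j => Qj f g B x (t0 • dt) j)
    rw [Qmax, ← hj]
    exact hQneg j
  calc theta f g B x ≤ Qmax f g B x (t0 • dt) := ciInf_le hbdd _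
    _ < 0 := hQmaxNeg


end NPQN
end
end

section
/- Assume each B_j is symmetric positive definite. If d ∈ ℝⁿ is a minimizer of Q(x,·) with d ≠ 0, then F_j′(x; d) < 0 for every j ∈ {1,…,m}; in particular x is not a critical point of F. -/
open Filter Topology
open scoped RealInnerProductSpace BigOperators

noncomputable section

namespace NPQN

variable {n m : ℕ}

private lemma dirderiv_exists
    {n m : ℕ} (f g : Fin m → EuclideanSpace ℝ (Fin n) → ℝ)
    (hfdiff : ∀ j, ContDiff ℝ 1 (f j))
    (hgconv : ∀ j, ConvexOn ℝ Set.univ (g j))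
    (x d : EuclideanSpace ℝ (Fin n)) (j : Fin m) :
    ∃ c : ℝ, HasDirDeriv (fun y => f j y + g j y) x d c ∧
      c ≤ ⟪gradient (f j) x, d⟫ + (g j (x + d) - g j x) := by
  -- the smooth part
  have hdiff : DifferentiableAt ℝ (f j) x := ((hfdiff j).differentiable one_ne_zero).differentiableAt
  have hfd := hdiff.hasGradientAt.hasFDerivAt
  have hcurve : HasDerivAt (fun t : ℝ => x + t • d) d 0 := by
    simpa using ((hasDerivAt_id (0:ℝ)).smul_const d).const_add x
  rw [show x = x + (0:ℝ) • d by simp] at hfd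
  have hfderiv : HasDerivAt (fun t : ℝ => f j (x + t • d)) ⟪gradient (f j) x, d⟫ 0 := by
    have := hfd.comp_hasDerivAt (x := (0:ℝ)) hcurve
    rw [show (fun t : ℝ => f j (x + t • d)) = f j ∘ (fun t : ℝ => x + t • d) from rfl]
    simpa [InnerProductSpace.toDual_apply_apply] using this
  have hftend : Tendsto (slope (fun t : ℝ => f j (x + t • d)) 0) (𝓝[>] (0:ℝ))
      (𝓝 ⟪gradient (f j) x, d⟫) :=
    (hasDerivAt_iff_tendsto_slope.mp hfderiv).mono_left
      (nhdsWithin_mono _ (fun t ht => ne_of_gt ht))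
  -- the convex part
  set φ : ℝ → ℝ := fun t => g j (x + t • d) with hφ
  have hφconv : ConvexOn ℝ Set.univ φ := by
    have := (hgconv j).comp_affineMap
      (AffineMap.lineMap x (x + d) : ℝ →ᵃ[ℝ] EuclideanSpace ℝ (Fin n))
    convert (by rw [Set.preimage_univ] at this; exact this : ConvexOn ℝ Set.univ (g j ∘ AffineMap.lineMap x (x + d))) using 1
    · rfl
    · rfl
    ext t
    simp [φ, Function.comp, AffineMap.lineMap_apply, add_sub_cancel_left, add_comm]
  set s : ℝ → ℝ := slope φ 0 with hs
  have hsm : ∀ a b : ℝ, a ≠ 0 → b ≠ 0 → a ≤ b → s a ≤ s b := by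
    intro a b ha hb hab
    have := hφconv.secant_mono (Set.mem_univ (0:ℝ)) (Set.mem_univ a) (Set.mem_univ b) ha hb hab
    simpa [s, slope_def_field] using this
  have hbdd : BddBelow (s '' Set.Ioi (0:ℝ)) := by
    refine ⟨s (-1), ?_⟩
    rintro y ⟨t, ht, rfl⟩
    exact hsm (-1) t (by norm_num) (ne_of_gt ht) (by linarith [Set.mem_Ioi.mp ht])
  have hmono : MonotoneOn s (Set.Ioi (0:ℝ)) := fun a ha b hb hab =>
    hsm a b (ne_of_gt ha) (ne_of_gt hb) hab
  have hgtend : Tendsto s (𝓝[>] (0:ℝ)) (𝓝 (sInf (s '' Set.Ioi 0))) :=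
    hmono.tendsto_nhdsGT hbdd
  set cg : ℝ := sInf (s '' Set.Ioi 0) with hcg
  have hcgle : cg ≤ g j (x + d) - g j x := by
    have h1 : s 1 = g j (x + d) - g j x := by simp [s, slope_def_field, φ]
    have := csInf_le hbdd (Set.mem_image_of_mem s (Set.mem_Ioi.mpr one_pos))
    rw [h1] at this
    exact this
  refine ⟨⟪gradient (f j) x, d⟫ + cg, ?_, by linarith⟩
  have := hftend.add hgtend
  unfold HasDirDeriv
  refine this.congr' ?_
  filter_upwards [self_mem_nhdsWithin] with t ht
  have htne : (t : ℝ) ≠ 0 := ne_of_gt ht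
  simp only [slope_def_field, s, φ]
  field_simp
  simp only [zero_smul, add_zero]
  ring

/-- Assume each `B_j` is symmetric positive definite. If `d ≠ 0` is a
minimizer of `Q(x,·)`, then `F_j′(x; d) < 0` for every `j`; in particular `x` is not a
critical point of `F`. -/
theorem descent_direction_of_nonzero_minimizer
    (n m : ℕ) (hn : 1 ≤ n) (hm : 1 ≤ m)
    (f g : Fin m → EuclideanSpace ℝ (Fin n) → ℝ)
    (hfconv : ∀ j, ConvexOn ℝ Set.univ (f j))
    (hfdiff : ∀ j, ContDiff ℝ 1 (f j))
    (hgconv : ∀ j, ConvexOn ℝ Set.univ (g j))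
    (hgcont : ∀ j, Continuous (g j))
    (B : Fin m → Matrix (Fin n) (Fin n) ℝ)
    (hBsymm : ∀ j, (B j).IsSymm)
    (hBpd : ∀ j, ∀ v : EuclideanSpace ℝ (Fin n), v ≠ 0 → 0 < mquad (B j) v)
    (x d : EuclideanSpace ℝ (Fin n))
    (hdmin : ∀ e, Qmax f g B x d ≤ Qmax f g B x e)
    (hdne : d ≠ 0) :
    (∀ j, ∃ c : ℝ, HasDirDeriv (fun y => f j y + g j y) x d c ∧ c < 0) ∧
    ¬ IsCriticalPt (fun j y => f j y + g j y) x := by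
  haveI : Nonempty (Fin m) := ⟨⟨0, hm⟩⟩
  have hQ0 : Qmax f g B x 0 = 0 := by
    have h0 : ∀ j, Qj f g B x 0 j = 0 := by
      intro j
      simp [Qj, mquad]
    simp only [Qmax, h0]
    exact ciSup_const
  have hQd : Qmax f g B x d ≤ 0 := by
    have := hdmin 0
    rwa [hQ0] at this
  have hQjle : ∀ j, Qj f g B x d j ≤ 0 := fun j =>
    le_trans (le_ciSup (Set.Finite.bddAbove (Set.finite_range _)) j) hQd
  have key : ∀ j, ∃ c : ℝ, HasDirDeriv (fun y => f j y + g j y) x d c ∧ c < 0 := by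
    intro j
    obtain ⟨c, hc, hcle⟩ := dirderiv_exists f g hfdiff hgconv x d j
    refine ⟨c, hc, ?_⟩
    have hq := hBpd j d hdne
    have := hQjle j
    unfold Qj at this
    linarith
  exact ⟨key, fun h => h ⟨d, key⟩⟩

end NPQN
end
end

section
/- Suppose σ > 0, and for each j ∈ {1,…,m} the matrix-valued map x ↦ B_j(x) into symmetric n×n matrices is continuous with B_j(x) ⪰ σI for all x ∈ ℝⁿ. Then the optimal value function x ↦ θ(x) is continuous on ℝⁿ, and the map x ↦ d(x) sending x to the unique minimizer of Q(x,·) is continuous on ℝⁿ. -/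
open Filter Topology
open scoped RealInnerProductSpace BigOperators

noncomputable section

namespace NPQN

variable {n m : ℕ}

lemma Qj_le_Qmax (f g : Fin m → EuclideanSpace ℝ (Fin n) → ℝ)
    (B : Fin m → Matrix (Fin n) (Fin n) ℝ) (x d : EuclideanSpace ℝ (Fin n)) (j : Fin m) :
    Qj f g B x d j ≤ Qmax f g B x d :=
  le_ciSup (Set.Finite.bddAbove (Set.finite_range _)) j

lemma Qmax_le (hm : 1 ≤ m) (f g : Fin m → EuclideanSpace ℝ (Fin n) → ℝ)
    (B : Fin m → Matrix (Fin n) (Fin n) ℝ) (x d : EuclideanSpace ℝ (Fin n)) {c : ℝ}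
    (h : ∀ j, Qj f g B x d j ≤ c) : Qmax f g B x d ≤ c := by
  haveI : Nonempty (Fin m) := ⟨⟨0, hm⟩⟩
  exact ciSup_le h

lemma Qmax_zero (hm : 1 ≤ m) (f g : Fin m → EuclideanSpace ℝ (Fin n) → ℝ)
    (B : Fin m → Matrix (Fin n) (Fin n) ℝ) (x : EuclideanSpace ℝ (Fin n)) :
    Qmax f g B x 0 = 0 := by
  haveI : Nonempty (Fin m) := ⟨⟨0, hm⟩⟩
  have : ∀ j, Qj f g B x 0 j = 0 := by
    intro j; simp [Qj, mquad]
  simp [Qmax, this]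

lemma mquad_combo (Bm : Matrix (Fin n) (Fin n) ℝ) (a d : EuclideanSpace ℝ (Fin n)) (t : ℝ) :
    mquad Bm ((1-t)•a + t•d)
      = (1-t)*mquad Bm a + t*mquad Bm d - (t*(1-t))*mquad Bm (d-a) := by
  simp only [mquad, map_add, map_smul, map_sub, inner_add_left, inner_add_right,
    inner_sub_left, inner_sub_right, real_inner_smul_left, real_inner_smul_right]
  ring

lemma mquad_cont_s4 :
    Continuous fun p : Matrix (Fin n) (Fin n) ℝ × EuclideanSpace ℝ (Fin n) => mquad p.1 p.2 := by
  have h1 : Continuous fun p : Matrix (Fin n) (Fin n) ℝ × EuclideanSpace ℝ (Fin n) =>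
      Matrix.toEuclideanLin p.1 p.2 := by
    have h2 : Continuous fun p : Matrix (Fin n) (Fin n) ℝ × EuclideanSpace ℝ (Fin n) =>
        p.1.mulVec (EuclideanSpace.equiv (Fin n) ℝ (p.2)) :=
      Continuous.matrix_mulVec continuous_fst
        ((EuclideanSpace.equiv (Fin n) ℝ).continuous.comp continuous_snd)
    exact (EuclideanSpace.equiv (Fin n) ℝ).symm.continuous.comp h2
  simp only [mquad]
  exact continuous_snd.inner h1

lemma grad_cont (f : EuclideanSpace ℝ (Fin n) → ℝ) (hf : ContDiff ℝ 1 f) :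
    Continuous (fun x => gradient f x) := by
  have h := hf.continuous_fderiv one_ne_zero
  exact ((InnerProductSpace.toDual ℝ (EuclideanSpace ℝ (Fin n))).symm.continuous).comp h

lemma Phi_cont (hm : 1 ≤ m) (f g : Fin m → EuclideanSpace ℝ (Fin n) → ℝ)
    (hfdiff : ∀ j, ContDiff ℝ 1 (f j)) (hgcont : ∀ j, Continuous (g j))
    (B : EuclideanSpace ℝ (Fin n) → Fin m → Matrix (Fin n) (Fin n) ℝ)
    (hBcont : ∀ j, Continuous (fun x => B x j)) :
    Continuous fun p : EuclideanSpace ℝ (Fin n) × EuclideanSpace ℝ (Fin n) =>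
      Qmax f g (B p.1) p.1 p.2 := by
  haveI : Nonempty (Fin m) := ⟨⟨0, hm⟩⟩
  have hQj : ∀ j : Fin m, Continuous fun p : EuclideanSpace ℝ (Fin n) × EuclideanSpace ℝ (Fin n) =>
      Qj f g (B p.1) p.1 p.2 j := by
    intro j
    simp only [Qj]
    refine Continuous.sub (Continuous.add (Continuous.add ?_ ?_) ?_) ?_
    · exact Continuous.inner ((grad_cont (f j) (hfdiff j)).comp continuous_fst) continuous_snd
    · have hb : Continuous fun p : EuclideanSpace ℝ (Fin n) × EuclideanSpace ℝ (Fin n) =>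
          (B p.1 j, p.2) := ((hBcont j).comp continuous_fst).prodMk continuous_snd
      have hc : Continuous fun p : EuclideanSpace ℝ (Fin n) × EuclideanSpace ℝ (Fin n) =>
          mquad (B p.1 j) p.2 := (mquad_cont_s4 (n := n)).comp
            (f := fun p : EuclideanSpace ℝ (Fin n) × EuclideanSpace ℝ (Fin n) => (B p.1 j, p.2)) hb
      exact continuous_const.mul hc
    · exact (hgcont j).comp (continuous_fst.add continuous_snd)
    · exact (hgcont j).comp continuous_fst
  have heq : ∀ p : EuclideanSpace ℝ (Fin n) × EuclideanSpace ℝ (Fin n),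
      Qmax f g (B p.1) p.1 p.2
        = Finset.univ.sup' Finset.univ_nonempty (fun j => Qj f g (B p.1) p.1 p.2 j) := by
    intro p; rw [Finset.sup'_univ_eq_ciSup]; rfl
  rw [show (fun p : EuclideanSpace ℝ (Fin n) × EuclideanSpace ℝ (Fin n) =>
      Qmax f g (B p.1) p.1 p.2) = _ from funext heq]
  rw [continuous_iff_continuousAt]
  intro p
  exact ContinuousAt.finset_sup'_apply _ (fun j _ => (hQj j).continuousAt)


lemma Qj_combo (hm : 1 ≤ m) (f g : Fin m → EuclideanSpace ℝ (Fin n) → ℝ)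
    (hgconv : ∀ j, ConvexOn ℝ Set.univ (g j))
    (σ : ℝ) (hσ : 0 < σ)
    (Bx : Fin m → Matrix (Fin n) (Fin n) ℝ) (hBx : ∀ j, MatGE (Bx j) σ)
    (x a d : EuclideanSpace ℝ (Fin n)) (t : ℝ) (ht0 : 0 < t) (ht1 : t ≤ 1) (j : Fin m) :
    Qj f g Bx x ((1-t)•a + t•d) j
      ≤ (1-t) * Qj f g Bx x a j + t * Qj f g Bx x d j - σ/2 * (t*(1-t)) * ‖d - a‖^2 := by
  have hmq := mquad_combo (Bx j) a d t
  have hq : σ * ‖d - a‖^2 ≤ mquad (Bx j) (d - a) := hBx j (d - a)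
  have hst : (0:ℝ) ≤ t * (1 - t) := mul_nonneg ht0.le (by linarith)
  have hmul : t * (1-t) * (σ * ‖d - a‖^2) ≤ t * (1-t) * mquad (Bx j) (d - a) :=
    mul_le_mul_of_nonneg_left hq hst
  have hgc : g j (x + ((1-t)•a + t•d)) ≤ (1-t) * g j (x + a) + t * g j (x + d) := by
    have hcomb : x + ((1-t)•a + t•d) = (1-t)•(x+a) + t•(x+d) := by
      module
    rw [hcomb]
    have := (hgconv j).2 (Set.mem_univ (x+a)) (Set.mem_univ (x+d))
      (by linarith : (0:ℝ) ≤ 1 - t) ht0.le (by ring)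
    simpa [smul_eq_mul] using this
  have hin : ⟪gradient (f j) x, (1-t)•a + t•d⟫
      = (1-t) * ⟪gradient (f j) x, a⟫ + t * ⟪gradient (f j) x, d⟫ := by
    rw [inner_add_right, real_inner_smul_right, real_inner_smul_right]
  simp only [Qj]
  rw [hmq, hin]
  nlinarith [hmul, hgc]

lemma growth (hm : 1 ≤ m) (f g : Fin m → EuclideanSpace ℝ (Fin n) → ℝ)
    (hgconv : ∀ j, ConvexOn ℝ Set.univ (g j))
    (σ : ℝ) (hσ : 0 < σ)
    (Bx : Fin m → Matrix (Fin n) (Fin n) ℝ) (hBx : ∀ j, MatGE (Bx j) σ)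
    (x a : EuclideanSpace ℝ (Fin n))
    (ha : ∀ e, Qmax f g Bx x a ≤ Qmax f g Bx x e) (d : EuclideanSpace ℝ (Fin n)) :
    Qmax f g Bx x a + σ/2 * ‖d - a‖^2 ≤ Qmax f g Bx x d := by
  set q := ‖d - a‖^2 with hqdef
  have hq0 : 0 ≤ q := sq_nonneg _
  have hstep : ∀ t : ℝ, 0 < t → t ≤ 1 →
      Qmax f g Bx x a + σ/2 * (1-t) * q ≤ Qmax f g Bx x d := by
    intro t ht0 ht1
    have hcomb : Qmax f g Bx x ((1-t)•a + t•d)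
        ≤ (1-t) * Qmax f g Bx x a + t * Qmax f g Bx x d - σ/2 * (t*(1-t)) * q := by
      refine Qmax_le hm f g Bx x _ (fun j => ?_)
      calc Qj f g Bx x ((1-t)•a + t•d) j
          ≤ (1-t) * Qj f g Bx x a j + t * Qj f g Bx x d j - σ/2 * (t*(1-t)) * q :=
            Qj_combo hm f g hgconv σ hσ Bx hBx x a d t ht0 ht1 j
        _ ≤ (1-t) * Qmax f g Bx x a + t * Qmax f g Bx x d - σ/2 * (t*(1-t)) * q := by
            have h1 := Qj_le_Qmax f g Bx x a j
            have h2 := Qj_le_Qmax f g Bx x d j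
            nlinarith
    have hmin := ha ((1-t)•a + t•d)
    have hkey : t * (Qmax f g Bx x a + σ/2 * (1-t) * q - Qmax f g Bx x d) ≤ 0 := by
      nlinarith
    nlinarith [mul_pos ht0 (show (0:ℝ) < 1 by norm_num)]
  refine le_of_forall_pos_le_add (fun ε hε => ?_)
  set c := σ/2 * q with hc
  have hc0 : 0 ≤ c := by positivity
  set t := min 1 (ε / (c + 1)) with htdef
  have ht0 : 0 < t := lt_min one_pos (by positivity)
  have ht1 : t ≤ 1 := min_le_left _ _
  have := hstep t ht0 ht1
  have htle : t ≤ ε / (c + 1) := min_le_right _ _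
  have hct : c * t ≤ ε := by
    have h1 : c * t ≤ c * (ε / (c + 1)) := mul_le_mul_of_nonneg_left htle hc0
    have h2 : c * (ε / (c + 1)) ≤ ε := by
      rw [mul_div_assoc'] at *
      rw [div_le_iff₀ (by linarith : (0:ℝ) < c + 1)]
      nlinarith
    linarith
  nlinarith


set_option maxHeartbeats 1000000 in
/-- If each `x ↦ B_j(x)` is a continuous map into symmetric matrices with
`B_j(x) ⪰ σI` for all `x`, then `x ↦ θ(x)` is continuous and the map `x ↦ d(x)` sending
`x` to the unique minimizer of `Q(x,·)` is continuous. -/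
theorem theta_and_dsel_continuous
    (n m : ℕ) (hn : 1 ≤ n) (hm : 1 ≤ m)
    (f g : Fin m → EuclideanSpace ℝ (Fin n) → ℝ)
    (hfconv : ∀ j, ConvexOn ℝ Set.univ (f j))
    (hfdiff : ∀ j, ContDiff ℝ 1 (f j))
    (hgconv : ∀ j, ConvexOn ℝ Set.univ (g j))
    (hgcont : ∀ j, Continuous (g j))
    (σ : ℝ) (hσ : 0 < σ)
    (B : EuclideanSpace ℝ (Fin n) → Fin m → Matrix (Fin n) (Fin n) ℝ)
    (hBcont : ∀ j, Continuous (fun x => B x j))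
    (hBsymm : ∀ x j, (B x j).IsSymm)
    (hB : ∀ x j, MatGE (B x j) σ)
    (dsel : EuclideanSpace ℝ (Fin n) → EuclideanSpace ℝ (Fin n))
    (hdsel : ∀ x e, Qmax f g (B x) x (dsel x) ≤ Qmax f g (B x) x e) :
    Continuous (fun x => theta f g (B x) x) ∧ Continuous dsel := by
  haveI : Nonempty (Fin m) := ⟨⟨0, hm⟩⟩
  have hΦ : Continuous fun p : EuclideanSpace ℝ (Fin n) × EuclideanSpace ℝ (Fin n) =>
      Qmax f g (B p.1) p.1 p.2 := Phi_cont hm f g hfdiff hgcont B hBcont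
  have hth : ∀ x, theta f g (B x) x = Qmax f g (B x) x (dsel x) := by
    intro x
    refine le_antisymm (ciInf_le ⟨Qmax f g (B x) x (dsel x), ?_⟩ (dsel x)) (le_ciInf (hdsel x))
    rintro y ⟨e, rfl⟩
    exact hdsel x e
  have hzero : ∀ x, Qmax f g (B x) x (dsel x) ≤ 0 :=
    fun x => (hdsel x 0).trans_eq (Qmax_zero hm f g (B x) x)
  have hgrow : ∀ x d, Qmax f g (B x) x (dsel x) + σ/2 * ‖d - dsel x‖^2 ≤ Qmax f g (B x) x d :=
    fun x d => growth hm f g hgconv σ hσ (B x) (hB x) x (dsel x) (hdsel x) d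
  have main : ∀ x0 : EuclideanSpace ℝ (Fin n), ∀ ε : ℝ, 0 < ε → ∃ δ > 0,
      ∀ x, dist x x0 < δ →
        |theta f g (B x) x - theta f g (B x0) x0| < ε ∧ dist (dsel x) (dsel x0) < ε := by
    intro x0 ε hε
    set j0 : Fin m := ⟨0, hm⟩ with hj0
    obtain ⟨M0, hM0⟩ := (isCompact_closedBall x0 2).exists_bound_of_continuousOn
      (hgcont j0).continuousOn
    obtain ⟨G0, hG0⟩ := (isCompact_closedBall x0 1).exists_bound_of_continuousOn
      ((grad_cont (f j0) (hfdiff j0)).continuousOn)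
    set M : ℝ := max M0 0 with hMdef
    set G : ℝ := max G0 0 with hGdef
    have hM : 0 ≤ M := le_max_right _ _
    have hG : 0 ≤ G := le_max_right _ _
    have hgb : ∀ y ∈ Metric.closedBall x0 2, |g j0 y| ≤ M := fun y hy =>
      le_trans (by simpa [Real.norm_eq_abs] using hM0 y hy) (le_max_left _ _)
    have hgradb : ∀ x ∈ Metric.closedBall x0 1, ‖gradient (f j0) x‖ ≤ G := fun x hx =>
      (hG0 x hx).trans (le_max_left _ _)
    set C : ℝ := G + 2 * M with hCdef
    have hC : 0 ≤ C := by positivity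
    have hglow : ∀ x ∈ Metric.closedBall x0 1, ∀ d : EuclideanSpace ℝ (Fin n),
        -(2*M) * (‖d‖ + 1) ≤ g j0 (x + d) - g j0 x := by
      intro x hx d
      have hxb2 : x ∈ Metric.closedBall x0 2 :=
        Metric.closedBall_subset_closedBall (by norm_num) hx
      have hbx := abs_le.1 (hgb x hxb2)
      rcases le_or_gt ‖d‖ 1 with hd | hd
      · have hxd : x + d ∈ Metric.closedBall x0 2 := by
          rw [Metric.mem_closedBall] at hx ⊢
          have h1 : dist (x + d) x0 ≤ dist (x + d) x + dist x x0 := dist_triangle _ _ _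
          have h2 : dist (x + d) x = ‖d‖ := by rw [dist_eq_norm]; simp
          linarith
        have hbd := abs_le.1 (hgb _ hxd)
        nlinarith [norm_nonneg d]
      · have hdpos : (0:ℝ) < ‖d‖ := lt_trans one_pos hd
        set u : EuclideanSpace ℝ (Fin n) := ‖d‖⁻¹ • d with hu
        have hun : ‖u‖ = 1 := by
          rw [hu, norm_smul, Real.norm_eq_abs, abs_of_pos (inv_pos.2 hdpos),
            inv_mul_cancel₀ hdpos.ne']
        have hxu : x + u ∈ Metric.closedBall x0 2 := by
          rw [Metric.mem_closedBall] at hx ⊢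
          have h1 : dist (x + u) x0 ≤ dist (x + u) x + dist x x0 := dist_triangle _ _ _
          have h2 : dist (x + u) x = ‖u‖ := by rw [dist_eq_norm]; simp
          rw [hun] at h2
          linarith
        have hbu := abs_le.1 (hgb _ hxu)
        have hcomb : x + u = (1 - ‖d‖⁻¹) • x + ‖d‖⁻¹ • (x + d) := by
          rw [hu]; module
        have hconv : g j0 (x + u) ≤ (1 - ‖d‖⁻¹) * g j0 x + ‖d‖⁻¹ * g j0 (x + d) := by
          rw [hcomb]
          have hti : (0:ℝ) ≤ ‖d‖⁻¹ := (inv_pos.2 hdpos).le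
          have ht1 : ‖d‖⁻¹ ≤ 1 := by
            rw [inv_le_one_iff₀]; right; linarith
          have := (hgconv j0).2 (Set.mem_univ x) (Set.mem_univ (x + d))
            (by linarith : (0:ℝ) ≤ 1 - ‖d‖⁻¹) hti (by ring)
          simpa [smul_eq_mul] using this
        have hmul := mul_le_mul_of_nonneg_left hconv hdpos.le
        have hexp : ‖d‖ * ((1 - ‖d‖⁻¹) * g j0 x + ‖d‖⁻¹ * g j0 (x + d))
            = (‖d‖ - 1) * g j0 x + g j0 (x + d) := by
          field_simp
        rw [hexp] at hmul
        nlinarith [mul_le_mul_of_nonneg_left hbu.1 hdpos.le,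
          mul_le_mul_of_nonneg_left hbx.2 (by linarith : (0:ℝ) ≤ ‖d‖ - 1)]
    have hlow : ∀ x ∈ Metric.closedBall x0 1, ∀ d : EuclideanSpace ℝ (Fin n),
        σ/2 * ‖d‖^2 - C * (‖d‖ + 1) ≤ Qmax f g (B x) x d := by
      intro x hx d
      refine le_trans ?_ (Qj_le_Qmax f g (B x) x d j0)
      have h1 : -(G * ‖d‖) ≤ ⟪gradient (f j0) x, d⟫ := by
        have ha := abs_real_inner_le_norm (gradient (f j0) x) d
        have hb := abs_le.1 ha
        nlinarith [hgradb x hx, norm_nonneg d]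
      have h2 : σ * ‖d‖^2 ≤ mquad (B x j0) d := hB x j0 d
      have h3 := hglow x hx d
      simp only [Qj]
      nlinarith [norm_nonneg d]
    set R : ℝ := 1 + 4 * C / σ with hRdef
    have hR1 : (1:ℝ) ≤ R := le_add_of_nonneg_right (by positivity)
    have hRb : ∀ x ∈ Metric.closedBall x0 1, ‖dsel x‖ ≤ R := by
      intro x hx
      by_contra hcon
      push_neg at hcon
      have h1 := hlow x hx (dsel x)
      have h2 := hzero x
      have hr1 : (1:ℝ) < ‖dsel x‖ := lt_of_le_of_lt hR1 hcon
      have h4 : σ + 4 * C < σ * ‖dsel x‖ := by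
        have h5 := mul_lt_mul_of_pos_left hcon hσ
        have h6 : σ * R = σ + 4 * C := by rw [hRdef]; field_simp
        linarith
      nlinarith [mul_lt_mul_of_pos_right h4 (by linarith : (0:ℝ) < ‖dsel x‖)]
    set K := (Metric.closedBall x0 1) ×ˢ (Metric.closedBall (0:EuclideanSpace ℝ (Fin n)) R)
      with hKdef
    have hKc : IsCompact K := (isCompact_closedBall _ _).prod (isCompact_closedBall _ _)
    have hu := hKc.uniformContinuousOn_of_continuous hΦ.continuousOn
    rw [Metric.uniformContinuousOn_iff] at hu
    set ε' : ℝ := min (ε/2) (σ/8 * ε^2) with hε'def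
    have hε'pos : 0 < ε' := lt_min (by positivity) (by positivity)
    obtain ⟨δ0, hδ0, hδ⟩ := hu ε' hε'pos
    refine ⟨min δ0 1, lt_min hδ0 one_pos, fun x hx => ?_⟩
    have hx1 : x ∈ Metric.closedBall x0 1 := by
      rw [Metric.mem_closedBall]
      exact le_of_lt (lt_of_lt_of_le hx (min_le_right _ _))
    have hx01 : x0 ∈ Metric.closedBall x0 1 := Metric.mem_closedBall_self (by norm_num)
    have hdx : dsel x ∈ Metric.closedBall (0:EuclideanSpace ℝ (Fin n)) R := by
      rw [Metric.mem_closedBall, dist_zero_right]; exact hRb x hx1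
    have hdx0 : dsel x0 ∈ Metric.closedBall (0:EuclideanSpace ℝ (Fin n)) R := by
      rw [Metric.mem_closedBall, dist_zero_right]; exact hRb x0 hx01
    have key : ∀ e ∈ Metric.closedBall (0:EuclideanSpace ℝ (Fin n)) R,
        |Qmax f g (B x) x e - Qmax f g (B x0) x0 e| < ε' := by
      intro e he
      have hmem1 : ((x, e) : EuclideanSpace ℝ (Fin n) × EuclideanSpace ℝ (Fin n)) ∈ K :=
        Set.mem_prod.2 ⟨hx1, he⟩
      have hmem2 : ((x0, e) : EuclideanSpace ℝ (Fin n) × EuclideanSpace ℝ (Fin n)) ∈ K :=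
        Set.mem_prod.2 ⟨hx01, he⟩
      have hdist : dist ((x, e) : EuclideanSpace ℝ (Fin n) × EuclideanSpace ℝ (Fin n))
          (x0, e) < δ0 := by
        rw [Prod.dist_eq]
        simp only [dist_self]
        rw [max_eq_left dist_nonneg]
        exact lt_of_lt_of_le hx (min_le_left _ _)
      have := hδ (x, e) hmem1 (x0, e) hmem2 hdist
      simpa [Real.dist_eq] using this
    have k1 := key (dsel x) hdx
    have k2 := key (dsel x0) hdx0
    rw [abs_sub_lt_iff] at k1 k2
    have m1 : Qmax f g (B x) x (dsel x) ≤ Qmax f g (B x) x (dsel x0) := hdsel x _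
    have m2 : Qmax f g (B x0) x0 (dsel x0) ≤ Qmax f g (B x0) x0 (dsel x) := hdsel x0 _
    have hg := hgrow x0 (dsel x)
    have hε'le : ε' ≤ ε/2 := min_le_left _ _
    have hε'2 : ε' ≤ σ/8 * ε^2 := min_le_right _ _
    constructor
    · rw [hth x, hth x0, abs_sub_lt_iff]
      constructor
      · linarith [k2.1, m1]
      · linarith [k1.2, m2]
    · have hq : σ/2 * ‖dsel x - dsel x0‖^2 ≤ 2 * ε' := by
        linarith [k1.2, m1, k2.1]
      have hlt : ‖dsel x - dsel x0‖^2 < ε^2 := by nlinarith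
      rw [dist_eq_norm]
      exact lt_of_pow_lt_pow_left₀ 2 hε.le hlt
  constructor
  · rw [continuous_iff_continuousAt]
    intro x0
    rw [Metric.continuousAt_iff]
    intro ε hε
    obtain ⟨δ, hδp, h⟩ := main x0 ε hε
    exact ⟨δ, hδp, fun {x} hx => by rw [Real.dist_eq]; exact (h x hx).1⟩
  · rw [continuous_iff_continuousAt]
    intro x0
    rw [Metric.continuousAt_iff]
    intro ε hε
    obtain ⟨δ, hδp, h⟩ := main x0 ε hε
    exact ⟨δ, hδp, fun {x} hx => (h x hx).2⟩


end NPQN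
end
end

section
/- Suppose σ > 0, each B_j satisfies B_j ⪰ σI, and each ∇f_j is Lipschitz continuous. Then for x ∈ ℝⁿ the following are equivalent: (i) x is a critical point of F; (ii) d(x) = 0, where d(x) is the unique minimizer of Q(x,·); (iii) θ(x) = 0. -/
open Filter Topology
open scoped RealInnerProductSpace BigOperators

noncomputable section

namespace NPQN

variable {n m : ℕ}

lemma fquot_tendsto (f : EuclideanSpace ℝ (Fin n) → ℝ) (x d : EuclideanSpace ℝ (Fin n))
    (hf : DifferentiableAt ℝ f x) :
    Tendsto (fun t : ℝ => (f (x + t • d) - f x) / t) (𝓝[>] (0 : ℝ))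
      (𝓝 ⟪gradient f x, d⟫) := by
  have hfd : HasFDerivAt f
      (InnerProductSpace.toDual ℝ (EuclideanSpace ℝ (Fin n)) (gradient f x)) x :=
    hasGradientAt_iff_hasFDerivAt.mp hf.hasGradientAt
  have hc : HasDerivAt (fun t : ℝ => x + t • d) d 0 := by
    simpa using ((hasDerivAt_id (0 : ℝ)).smul_const d).const_add x
  have hfd' : HasFDerivAt f
      (InnerProductSpace.toDual ℝ (EuclideanSpace ℝ (Fin n)) (gradient f x))
      ((fun t : ℝ => x + t • d) 0) := by simpa using hfd
  have hcomp := hfd'.comp_hasDerivAt 0 hc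
  have hcomp' : HasDerivAt (fun t : ℝ => f (x + t • d)) ⟪gradient f x, d⟫ 0 := by
    rw [InnerProductSpace.toDual_apply_apply] at hcomp; exact hcomp
  have h := hasDerivAt_iff_tendsto_slope.mp hcomp'
  have h2 := h.mono_left (nhdsWithin_mono 0 (fun t ht => ne_of_gt ht))
  refine h2.congr fun t => ?_
  simp [slope_def_field]

lemma gquot_exists (g : EuclideanSpace ℝ (Fin n) → ℝ) (hg : ConvexOn ℝ Set.univ g)
    (x d : EuclideanSpace ℝ (Fin n)) :
    ∃ ℓ : ℝ, Tendsto (fun t : ℝ => (g (x + t • d) - g x) / t) (𝓝[>] (0 : ℝ)) (𝓝 ℓ) ∧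
      ℓ ≤ g (x + d) - g x := by
  set ψ : ℝ → ℝ := fun t => g (x + t • d) with hψdef
  have hψconv : ConvexOn ℝ Set.univ ψ := by
    have h1 := hg.comp_affineMap (AffineMap.lineMap x (x + d) : ℝ →ᵃ[ℝ] EuclideanSpace ℝ (Fin n))
    have hA : ∀ t : ℝ, (AffineMap.lineMap x (x + d) : ℝ →ᵃ[ℝ] EuclideanSpace ℝ (Fin n)) t
        = x + t • d := by
      intro t
      simp [AffineMap.lineMap_apply]
      abel
    have he : ψ = g ∘ (AffineMap.lineMap x (x + d) : ℝ →ᵃ[ℝ] EuclideanSpace ℝ (Fin n)) := by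
      funext t
      simp [Function.comp_apply, hA t, hψdef]
    rw [he]
    simpa using h1
  set q : ℝ → ℝ := fun t => (g (x + t • d) - g x) / t with hqdef
  have hq0 : ψ 0 = g x := by simp [hψdef]
  have hqψ : ∀ t : ℝ, q t = (ψ t - ψ 0) / (t - 0) := by
    intro t; simp [hqdef, hq0, hψdef]
  have hmono : MonotoneOn q (Set.Ioi (0 : ℝ)) := by
    intro a ha b hb hab
    rw [hqψ a, hqψ b]
    exact hψconv.secant_mono (Set.mem_univ _) (Set.mem_univ _) (Set.mem_univ _)
      (ne_of_gt ha) (ne_of_gt hb) hab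
  have hbdd : BddBelow (q '' Set.Ioi (0 : ℝ)) := by
    refine ⟨ψ 0 - ψ (-1), ?_⟩
    rintro y ⟨t, ht, rfl⟩
    have h := hψconv.secant_mono (a := (0 : ℝ)) (x := (-1 : ℝ)) (y := t)
      (Set.mem_univ _) (Set.mem_univ _) (Set.mem_univ _) (by norm_num)
      (ne_of_gt ht) (by linarith [Set.mem_Ioi.mp ht])
    have e : (ψ (-1) - ψ 0) / (-1 - 0 : ℝ) = ψ 0 - ψ (-1) := by ring
    rw [hqψ t]; linarith [e ▸ h]
  refine ⟨sInf (q '' Set.Ioi 0), hmono.tendsto_nhdsGT hbdd, ?_⟩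
  have h1 : q 1 = g (x + d) - g x := by simp [hqdef]
  calc sInf (q '' Set.Ioi 0) ≤ q 1 :=
        csInf_le hbdd (Set.mem_image_of_mem q (by norm_num))
    _ = g (x + d) - g x := h1

/-- Suppose `σ > 0`, each `B_j ⪰ σI`, and each `∇f_j` is Lipschitz
continuous. Then for `x ∈ ℝⁿ` the following are equivalent: (i) `x` is a critical point
of `F`; (ii) `d(x) = 0`, where `d(x)` is the unique minimizer of `Q(x,·)`;
(iii) `θ(x) = 0`. -/
theorem critical_iff_dzero_iff_theta_zero
    (n m : ℕ) (hn : 1 ≤ n) (hm : 1 ≤ m)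
    (f g : Fin m → EuclideanSpace ℝ (Fin n) → ℝ)
    (hfconv : ∀ j, ConvexOn ℝ Set.univ (f j))
    (hfdiff : ∀ j, ContDiff ℝ 1 (f j))
    (hLip : ∀ j, ∃ L : NNReal, LipschitzWith L (fun y => gradient (f j) y))
    (hgconv : ∀ j, ConvexOn ℝ Set.univ (g j))
    (hgcont : ∀ j, Continuous (g j))
    (B : Fin m → Matrix (Fin n) (Fin n) ℝ)
    (hBsymm : ∀ j, (B j).IsSymm)
    (σ : ℝ) (hσ : 0 < σ)
    (hB : ∀ j, MatGE (B j) σ)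
    (x d0 : EuclideanSpace ℝ (Fin n))
    (hd0min : ∀ d, Qmax f g B x d0 ≤ Qmax f g B x d) :
    (IsCriticalPt (fun j y => f j y + g j y) x ↔ d0 = 0) ∧
    (IsCriticalPt (fun j y => f j y + g j y) x ↔ theta f g B x = 0) := by
  haveI : Nonempty (Fin m) := ⟨⟨0, hm⟩⟩
  have hbddQ : ∀ d : EuclideanSpace ℝ (Fin n), BddAbove (Set.range fun j => Qj f g B x d j) :=
    fun d => Set.Finite.bddAbove (Set.finite_range _)
  have hQ0 : Qmax f g B x 0 = 0 := by
    have hj : ∀ j, Qj f g B x 0 j = 0 := by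
      intro j; simp [Qj, mquad]
    unfold Qmax
    simp only [hj]
    exact ciSup_const
  have hQd0le : Qmax f g B x d0 ≤ 0 := le_of_le_of_eq (hd0min 0) hQ0
  have htheta : theta f g B x = Qmax f g B x d0 := by
    refine le_antisymm (ciInf_le ⟨Qmax f g B x d0, ?_⟩ d0) (le_ciInf hd0min)
    rintro y ⟨d, rfl⟩
    exact hd0min d
  -- (i) ↔ (ii)
  have hiff1 : IsCriticalPt (fun j y => f j y + g j y) x ↔ d0 = 0 := by
    constructor
    · -- contrapositive: d0 ≠ 0 → not critical
      intro hcrit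
      by_contra hne
      apply hcrit
      refine ⟨d0, fun j => ?_⟩
      obtain ⟨ℓ, hℓt, hℓle⟩ := gquot_exists (g j) (hgconv j) x d0
      have hfq := fquot_tendsto (f j) x d0 ((hfdiff j).differentiable one_ne_zero x)
      refine ⟨⟪gradient (f j) x, d0⟫ + ℓ, ?_, ?_⟩
      · unfold HasDirDeriv
        refine (hfq.add hℓt).congr fun t => ?_
        ring
      · have hq := hB j d0
        have hQjQ : Qj f g B x d0 j ≤ Qmax f g B x d0 := le_ciSup (hbddQ d0) j
        have hQjdef : Qj f g B x d0 j
            = ⟪gradient (f j) x, d0⟫ + (1 / 2) * mquad (B j) d0 + g j (x + d0) - g j x := rfl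
        have hd0pos : 0 < ‖d0‖ ^ 2 := by
          have : ‖d0‖ ≠ 0 := fun h => hne (norm_eq_zero.mp h)
          positivity
        nlinarith [mul_pos hσ hd0pos]
    · -- d0 = 0 → critical
      intro hd0
      subst hd0
      rintro ⟨d, hd⟩
      choose c hcd hcneg using hd
      have hQt : ∀ j, Tendsto (fun t : ℝ => Qj f g B x (t • d) j / t) (𝓝[>] (0 : ℝ))
          (𝓝 (c j)) := by
        intro j
        have hfq := fquot_tendsto (f j) x d ((hfdiff j).differentiable one_ne_zero x)
        have hcd' : Tendsto (fun t : ℝ =>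
            ((f j (x + t • d) + g j (x + t • d)) - (f j x + g j x)) / t)
            (𝓝[>] (0 : ℝ)) (𝓝 (c j)) := hcd j
        have hgq : Tendsto (fun t : ℝ => (g j (x + t • d) - g j x) / t) (𝓝[>] (0 : ℝ))
            (𝓝 (c j - ⟪gradient (f j) x, d⟫)) := by
          refine (hcd'.sub hfq).congr fun t => ?_
          ring
        have hM : Tendsto (fun t : ℝ => t / 2 * mquad (B j) d) (𝓝[>] (0 : ℝ)) (𝓝 0) := by
          have h0 : Tendsto (fun t : ℝ => t / 2 * mquad (B j) d) (𝓝 0)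
              (𝓝 ((0 : ℝ) / 2 * mquad (B j) d)) := (tendsto_id.div_const 2).mul_const _
          simpa using h0.mono_left nhdsWithin_le_nhds
        have h : Tendsto (fun t : ℝ =>
            ⟪gradient (f j) x, d⟫ + t / 2 * mquad (B j) d + (g j (x + t • d) - g j x) / t)
            (𝓝[>] (0 : ℝ))
            (𝓝 (⟪gradient (f j) x, d⟫ + 0 + (c j - ⟪gradient (f j) x, d⟫))) :=
          (tendsto_const_nhds.add hM).add hgq
        have heq : ∀ᶠ t in 𝓝[>] (0 : ℝ),
            (⟪gradient (f j) x, d⟫ + t / 2 * mquad (B j) d + (g j (x + t • d) - g j x) / t)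
              = Qj f g B x (t • d) j / t := by
          filter_upwards [self_mem_nhdsWithin] with t ht
          have ht0 : (t : ℝ) ≠ 0 := ne_of_gt ht
          unfold Qj
          rw [mquad_smul, real_inner_smul_right]
          field_simp
          ring
        have h' := h.congr' heq
        have hc : ⟪gradient (f j) x, d⟫ + 0 + (c j - ⟪gradient (f j) x, d⟫) = c j := by ring
        rwa [hc] at h'
      have hev : ∀ᶠ t in 𝓝[>] (0 : ℝ), ∀ j, Qj f g B x (t • d) j / t < 0 :=
        eventually_all.2 fun j => (hQt j).eventually_lt_const (hcneg j)
      obtain ⟨t, ht, htpos⟩ := (hev.and self_mem_nhdsWithin).exists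
      have htpos' : (0 : ℝ) < t := htpos
      have hQjt : ∀ j, Qj f g B x (t • d) j < 0 := by
        intro j
        have h1 := mul_neg_of_neg_of_pos (ht j) htpos'
        rwa [div_mul_cancel₀ _ (ne_of_gt htpos')] at h1
      obtain ⟨j0, -, hj0⟩ := Finset.exists_max_image Finset.univ
        (fun j => Qj f g B x (t • d) j) ⟨⟨0, hm⟩, Finset.mem_univ _⟩
      have hle : Qmax f g B x (t • d) ≤ Qj f g B x (t • d) j0 :=
        ciSup_le fun j => hj0 j (Finset.mem_univ j)
      have hneg : Qmax f g B x (t • d) < 0 := lt_of_le_of_lt hle (hQjt j0)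
      have h0le : (0 : ℝ) ≤ Qmax f g B x (t • d) := hQ0 ▸ hd0min (t • d)
      linarith
  -- (ii) ↔ (iii)
  have hiff2 : d0 = 0 ↔ theta f g B x = 0 := by
    constructor
    · intro hd0; rw [htheta, hd0, hQ0]
    · intro hth
      have hQd0 : Qmax f g B x d0 = 0 := by rw [← htheta, hth]
      have hhalf : ∀ j, Qj f g B x ((1 / 2 : ℝ) • d0) j
          ≤ (1 / 2) * Qmax f g B x d0 - σ / 8 * ‖d0‖ ^ 2 := by
        intro j
        have hgj := (hgconv j).2 (Set.mem_univ (x + d0)) (Set.mem_univ x)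
          (by norm_num) (by norm_num) (by norm_num : (1 / 2 : ℝ) + 1 / 2 = 1)
        have hpt : (1 / 2 : ℝ) • (x + d0) + (1 / 2 : ℝ) • x = x + (1 / 2 : ℝ) • d0 := by
          rw [smul_add]
          rw [show ((1:ℝ)/2) • x + ((1:ℝ)/2) • d0 + ((1:ℝ)/2) • x
            = (((1:ℝ)/2) • x + ((1:ℝ)/2) • x) + ((1:ℝ)/2) • d0 by abel, ← add_smul]
          norm_num
        rw [hpt] at hgj
        simp only [smul_eq_mul] at hgj
        have hmq : mquad (B j) ((1 / 2 : ℝ) • d0) = (1 / 4) * mquad (B j) d0 := by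
          rw [mquad_smul]; norm_num
        have hin : ⟪gradient (f j) x, (1 / 2 : ℝ) • d0⟫
            = (1 / 2) * ⟪gradient (f j) x, d0⟫ := real_inner_smul_right _ _ _
        have hql := hB j d0
        have hQjQ : Qj f g B x d0 j ≤ Qmax f g B x d0 := le_ciSup (hbddQ d0) j
        have e1 : Qj f g B x d0 j
            = ⟪gradient (f j) x, d0⟫ + (1 / 2) * mquad (B j) d0 + g j (x + d0) - g j x := rfl
        have e2 : Qj f g B x ((1 / 2 : ℝ) • d0) j
            = (1 / 2) * ⟪gradient (f j) x, d0⟫ + (1 / 2) * ((1 / 4) * mquad (B j) d0)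
              + g j (x + (1 / 2 : ℝ) • d0) - g j x := by
          unfold Qj; rw [hin, hmq]
        linarith
      have hsup : Qmax f g B x ((1 / 2 : ℝ) • d0)
          ≤ (1 / 2) * Qmax f g B x d0 - σ / 8 * ‖d0‖ ^ 2 := ciSup_le hhalf
      have hge : Qmax f g B x d0 ≤ Qmax f g B x ((1 / 2 : ℝ) • d0) := hd0min _
      have hnorm : ‖d0‖ ^ 2 ≤ 0 := by
        rw [hQd0] at hsup hge
        nlinarith
      have : ‖d0‖ = 0 := by nlinarith [norm_nonneg d0, sq_nonneg ‖d0‖]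
      exact norm_eq_zero.mp this
  exact ⟨hiff1, hiff1.trans hiff2⟩

end NPQN
end
end

section
/- Assume each B_j is symmetric positive definite. If d* ∈ ℝⁿ is a minimizer of Q(x,·) and θ = Q(x,d*), then there exist λ ∈ Δ_m and vectors ξ_j ∈ ∂g_j(x+d*) for j = 1,…,m such that Σ_{j=1}^m λ_j(∇f_j(x) + B_j d* + ξ_j) = 0, Q_j(x,d*) ≤ θ for all j, and λ_j(Q_j(x,d*) − θ) = 0 for all j. -/
open Filter Topology
open scoped RealInnerProductSpace BigOperators

noncomputable section

namespace NPQN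

variable {n m : ℕ}

variable {n : ℕ}

/-- difference quotient -/
def dq (g : EuclideanSpace ℝ (Fin n) → ℝ) (y u : EuclideanSpace ℝ (Fin n)) (t : ℝ) : ℝ :=
  (g (y + t • u) - g y) / t

/-- one-sided directional derivative (as inf of difference quotients) -/
def Dd (g : EuclideanSpace ℝ (Fin n) → ℝ) (y u : EuclideanSpace ℝ (Fin n)) : ℝ :=
  sInf (dq g y u '' Set.Ioi 0)

lemma lineConvex {g : EuclideanSpace ℝ (Fin n) → ℝ} (hg : ConvexOn ℝ Set.univ g)
    (y u : EuclideanSpace ℝ (Fin n)) :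
    ConvexOn ℝ Set.univ (fun t : ℝ => g (y + t • u)) := by
  have := hg.comp_affineMap (AffineMap.lineMap y (y + u))
  simp only [Set.preimage_univ] at this
  have heq : (fun t : ℝ => g (y + t • u)) = g ∘ (AffineMap.lineMap y (y + u)) := by
    funext t
    simp only [Function.comp_apply, AffineMap.lineMap_apply_module]
    congr 1
    module
  rw [heq]; exact this

lemma dq_mono {g : EuclideanSpace ℝ (Fin n) → ℝ} (hg : ConvexOn ℝ Set.univ g)
    (y u : EuclideanSpace ℝ (Fin n)) {s t : ℝ} (hs : 0 < s) (hst : s ≤ t) :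
    dq g y u s ≤ dq g y u t := by
  have h := (lineConvex hg y u).secant_mono (a := 0) (x := s) (y := t)
    (Set.mem_univ _) (Set.mem_univ _) (Set.mem_univ _) (ne_of_gt hs)
    (ne_of_gt (lt_of_lt_of_le hs hst)) hst
  simpa [dq, sub_zero] using h

lemma dq_lower {g : EuclideanSpace ℝ (Fin n) → ℝ} (hg : ConvexOn ℝ Set.univ g)
    (y u : EuclideanSpace ℝ (Fin n)) {t : ℝ} (ht : 0 < t) :
    g y - g (y - u) ≤ dq g y u t := by
  have h := (lineConvex hg y u).secant_mono (a := 0) (x := (-1 : ℝ)) (y := t)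
    (Set.mem_univ _) (Set.mem_univ _) (Set.mem_univ _) (by norm_num)
    (ne_of_gt ht) (by linarith)
  have h1 : y + (-1 : ℝ) • u = y - u := by module
  rw [h1] at h
  simpa [dq, sub_zero, div_neg, neg_sub] using h

lemma dq_nonempty (g : EuclideanSpace ℝ (Fin n) → ℝ) (y u : EuclideanSpace ℝ (Fin n)) :
    (dq g y u '' Set.Ioi 0).Nonempty :=
  ⟨dq g y u 1, ⟨1, by norm_num, rfl⟩⟩

lemma dq_bddBelow {g : EuclideanSpace ℝ (Fin n) → ℝ} (hg : ConvexOn ℝ Set.univ g)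
    (y u : EuclideanSpace ℝ (Fin n)) :
    BddBelow (dq g y u '' Set.Ioi 0) := by
  refine ⟨g y - g (y - u), ?_⟩
  rintro _ ⟨t, ht, rfl⟩
  exact dq_lower hg y u ht

lemma Dd_le_dq {g : EuclideanSpace ℝ (Fin n) → ℝ} (hg : ConvexOn ℝ Set.univ g)
    (y u : EuclideanSpace ℝ (Fin n)) {t : ℝ} (ht : 0 < t) :
    Dd g y u ≤ dq g y u t :=
  csInf_le (dq_bddBelow hg y u) ⟨t, ht, rfl⟩

lemma le_Dd {g : EuclideanSpace ℝ (Fin n) → ℝ} {c : ℝ}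
    (y u : EuclideanSpace ℝ (Fin n)) (h : ∀ t : ℝ, 0 < t → c ≤ dq g y u t) :
    c ≤ Dd g y u := by
  refine le_csInf (dq_nonempty g y u) ?_
  rintro _ ⟨t, ht, rfl⟩
  exact h t ht

lemma Dd_exists_lt {g : EuclideanSpace ℝ (Fin n) → ℝ} (y u : EuclideanSpace ℝ (Fin n))
    {ε : ℝ} (hε : 0 < ε) : ∃ t : ℝ, 0 < t ∧ dq g y u t < Dd g y u + ε := by
  obtain ⟨_, ⟨t, ht, rfl⟩, hlt⟩ :=
    exists_lt_of_csInf_lt (dq_nonempty g y u) (lt_add_of_pos_right (Dd g y u) hε)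
  exact ⟨t, ht, hlt⟩

lemma Dd_zero (g : EuclideanSpace ℝ (Fin n) → ℝ) (y : EuclideanSpace ℝ (Fin n)) :
    Dd g y 0 = 0 := by
  have : dq g y 0 '' Set.Ioi 0 = {0} := by
    apply Set.eq_singleton_iff_nonempty_unique_mem.mpr
    refine ⟨dq_nonempty g y 0, ?_⟩
    rintro _ ⟨t, ht, rfl⟩
    simp [dq]
  rw [Dd, this, csInf_singleton]

lemma Dd_smul_le {g : EuclideanSpace ℝ (Fin n) → ℝ} (hg : ConvexOn ℝ Set.univ g)
    (y u : EuclideanSpace ℝ (Fin n)) {c : ℝ} (hc : 0 < c) :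
    Dd g y (c • u) ≤ c * Dd g y u := by
  rw [← div_le_iff₀' hc]
  refine le_Dd y u fun t ht => ?_
  rw [div_le_iff₀' hc]
  have key : dq g y (c • u) (t / c) = c * dq g y u t := by
    have h1 : y + (t / c) • c • u = y + t • u := by
      rw [smul_smul, div_mul_cancel₀]; exact ne_of_gt hc
    have htne := ne_of_gt ht
    have hcne := ne_of_gt hc
    rw [dq, h1, dq]
    field_simp
  calc Dd g y (c • u) ≤ dq g y (c • u) (t / c) := Dd_le_dq hg y _ (div_pos ht hc)
    _ = c * dq g y u t := key

lemma Dd_smul {g : EuclideanSpace ℝ (Fin n) → ℝ} (hg : ConvexOn ℝ Set.univ g)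
    (y u : EuclideanSpace ℝ (Fin n)) {c : ℝ} (hc : 0 < c) :
    Dd g y (c • u) = c * Dd g y u := by
  refine le_antisymm (Dd_smul_le hg y u hc) ?_
  have h := Dd_smul_le hg y (c • u) (c := c⁻¹) (by positivity)
  rw [smul_smul, inv_mul_cancel₀ (ne_of_gt hc), one_smul] at h
  calc c * Dd g y u ≤ c * (c⁻¹ * Dd g y (c • u)) := by
        exact mul_le_mul_of_nonneg_left h hc.le
    _ = Dd g y (c • u) := by field_simp

lemma Dd_subadd {g : EuclideanSpace ℝ (Fin n) → ℝ} (hg : ConvexOn ℝ Set.univ g)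
    (y u v : EuclideanSpace ℝ (Fin n)) :
    Dd g y (u + v) ≤ Dd g y u + Dd g y v := by
  refine le_of_forall_pos_le_add fun ε hε => ?_
  obtain ⟨t₁, ht₁, h₁⟩ := Dd_exists_lt (g := g) y u (half_pos hε)
  obtain ⟨t₂, ht₂, h₂⟩ := Dd_exists_lt (g := g) y v (half_pos hε)
  set t := min t₁ t₂ with htdef
  have ht : 0 < t := lt_min ht₁ ht₂
  have hqu : dq g y u t ≤ dq g y u t₁ := dq_mono hg y u ht (min_le_left _ _)
  have hqv : dq g y v t ≤ dq g y v t₂ := dq_mono hg y v ht (min_le_right _ _)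
  have hmid : dq g y (u + v) (t / 2) ≤ dq g y u t + dq g y v t := by
    have hcvx := hg.2 (Set.mem_univ (y + t • u)) (Set.mem_univ (y + t • v))
      (by norm_num : (0:ℝ) ≤ 1/2) (by norm_num : (0:ℝ) ≤ 1/2) (by norm_num)
    have heq : (1/2 : ℝ) • (y + t • u) + (1/2 : ℝ) • (y + t • v) = y + (t/2) • (u + v) := by
      module
    rw [heq] at hcvx
    rw [dq, dq, dq, ← add_div, div_le_div_iff₀ (by positivity) ht]
    rw [smul_eq_mul, smul_eq_mul] at hcvx
    nlinarith [hcvx]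
  calc Dd g y (u + v) ≤ dq g y (u + v) (t / 2) := Dd_le_dq hg y _ (by positivity)
    _ ≤ dq g y u t + dq g y v t := hmid
    _ ≤ dq g y u t₁ + dq g y v t₂ := add_le_add hqu hqv
    _ ≤ (Dd g y u + ε/2) + (Dd g y v + ε/2) := add_le_add h₁.le h₂.le
    _ = Dd g y u + Dd g y v + ε := by ring

lemma Dd_subgrad {g : EuclideanSpace ℝ (Fin n) → ℝ} (hg : ConvexOn ℝ Set.univ g)
    {y ξ : EuclideanSpace ℝ (Fin n)} (h : ∀ u, ⟪ξ, u⟫ ≤ Dd g y u) :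
    ∀ z, g y + ⟪ξ, z - y⟫ ≤ g z := by
  intro z
  have h1 : ⟪ξ, z - y⟫ ≤ dq g y (z - y) 1 := (h (z - y)).trans (Dd_le_dq hg y _ one_pos)
  simp only [dq, one_smul, div_one] at h1
  have : y + (z - y) = z := by abel
  rw [this] at h1
  linarith

section HB

variable {n : ℕ}

lemma exists_vec_le_sublinear (N : EuclideanSpace ℝ (Fin n) → ℝ)
    (hom : ∀ c : ℝ, 0 < c → ∀ u, N (c • u) = c * N u)
    (add : ∀ u v, N (u + v) ≤ N u + N v) :
    ∃ ξ : EuclideanSpace ℝ (Fin n), ∀ u, ⟪ξ, u⟫ ≤ N u := by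
  have hN0 : N 0 = 0 := by
    have h := hom 2 (by norm_num) 0
    rw [smul_zero] at h
    linarith
  obtain ⟨ℓ, -, hle⟩ := exists_extension_of_le_sublinear
    ((0 : EuclideanSpace ℝ (Fin n) →ₗ[ℝ] ℝ).toPMap ⊥) N hom add
    (by
      rintro ⟨x, hx⟩
      rcases (Submodule.mem_bot ℝ).mp hx with rfl
      simp [hN0])
  have hcont : Continuous ℓ := ℓ.continuous_of_finiteDimensional
  refine ⟨(InnerProductSpace.toDual ℝ (EuclideanSpace ℝ (Fin n))).symm ⟨ℓ, hcont⟩, fun u => ?_⟩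
  rw [InnerProductSpace.toDual_symm_apply]
  exact hle u

lemma hb_split (N₁ N₂ : EuclideanSpace ℝ (Fin n) → ℝ)
    (hom₁ : ∀ c : ℝ, 0 < c → ∀ u, N₁ (c • u) = c * N₁ u)
    (add₁ : ∀ u v, N₁ (u + v) ≤ N₁ u + N₁ v)
    (hom₂ : ∀ c : ℝ, 0 < c → ∀ u, N₂ (c • u) = c * N₂ u)
    (add₂ : ∀ u v, N₂ (u + v) ≤ N₂ u + N₂ v)
    (ξ : EuclideanSpace ℝ (Fin n)) (hξ : ∀ u, ⟪ξ, u⟫ ≤ N₁ u + N₂ u) :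
    ∃ ξ₁ ξ₂ : EuclideanSpace ℝ (Fin n),
      (∀ u, ⟪ξ₁, u⟫ ≤ N₁ u) ∧ (∀ u, ⟪ξ₂, u⟫ ≤ N₂ u) ∧ ξ₁ + ξ₂ = ξ := by
  have h10 : N₁ 0 = 0 := by have h := hom₁ 2 (by norm_num) 0; rw [smul_zero] at h; linarith
  have h20 : N₂ 0 = 0 := by have h := hom₂ 2 (by norm_num) 0; rw [smul_zero] at h; linarith
  set P : EuclideanSpace ℝ (Fin n) → EuclideanSpace ℝ (Fin n) → ℝ :=
    fun u v => N₁ v + (⟪ξ, u - v⟫ + N₂ (v - u)) with hP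
  have Plb : ∀ u v, ⟪ξ, u⟫ - N₂ u ≤ P u v := by
    intro u v
    have h1 : ⟪ξ, v⟫ - N₂ v ≤ N₁ v := by have := hξ v; linarith
    have h2 : N₂ v ≤ N₂ (v - u) + N₂ u := by
      have := add₂ (v - u) u; rwa [sub_add_cancel] at this
    have h3 : ⟪ξ, v⟫ + ⟪ξ, u - v⟫ = ⟪ξ, u⟫ := by
      rw [← inner_add_right]; congr 1; abel
    simp only [hP]
    linarith
  have Pne : ∀ u, (Set.range (P u)).Nonempty := fun u => ⟨P u 0, 0, rfl⟩
  have Pbdd : ∀ u, BddBelow (Set.range (P u)) := by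
    intro u; exact ⟨⟪ξ, u⟫ - N₂ u, by rintro _ ⟨v, rfl⟩; exact Plb u v⟩
  set M : EuclideanSpace ℝ (Fin n) → ℝ := fun u => sInf (Set.range (P u)) with hM
  have M_le : ∀ u v, M u ≤ P u v := fun u v => csInf_le (Pbdd u) ⟨v, rfl⟩
  have le_M : ∀ u c, (∀ v, c ≤ P u v) → c ≤ M u := fun u c h =>
    le_csInf (Pne u) (by rintro _ ⟨v, rfl⟩; exact h v)
  have M_lt : ∀ u, ∀ ε : ℝ, 0 < ε → ∃ v, P u v < M u + ε := by
    intro u ε hε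
    obtain ⟨_, ⟨v, rfl⟩, hlt⟩ := exists_lt_of_csInf_lt (Pne u) (lt_add_of_pos_right (M u) hε)
    exact ⟨v, hlt⟩
  have M_le1 : ∀ u, M u ≤ N₁ u := by
    intro u
    have := M_le u u
    simpa [hP, h20] using this
  have M_le2 : ∀ u, M u ≤ ⟪ξ, u⟫ + N₂ (-u) := by
    intro u
    have := M_le u 0
    simpa [hP, h10] using this
  have M_add : ∀ u₁ u₂, M (u₁ + u₂) ≤ M u₁ + M u₂ := by
    intro u₁ u₂
    refine le_of_forall_pos_le_add fun ε hε => ?_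
    obtain ⟨v₁, hv₁⟩ := M_lt u₁ (ε/2) (half_pos hε)
    obtain ⟨v₂, hv₂⟩ := M_lt u₂ (ε/2) (half_pos hε)
    have key : P (u₁ + u₂) (v₁ + v₂) ≤ P u₁ v₁ + P u₂ v₂ := by
      have e1 : N₁ (v₁ + v₂) ≤ N₁ v₁ + N₁ v₂ := add₁ v₁ v₂
      have e2 : ⟪ξ, u₁ + u₂ - (v₁ + v₂)⟫ = ⟪ξ, u₁ - v₁⟫ + ⟪ξ, u₂ - v₂⟫ := by
        rw [← inner_add_right]; congr 1; abel
      have e3 : N₂ (v₁ + v₂ - (u₁ + u₂)) ≤ N₂ (v₁ - u₁) + N₂ (v₂ - u₂) := by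
        have := add₂ (v₁ - u₁) (v₂ - u₂)
        have harg : v₁ - u₁ + (v₂ - u₂) = v₁ + v₂ - (u₁ + u₂) := by abel
        rwa [harg] at this
      simp only [hP]
      linarith
    calc M (u₁ + u₂) ≤ P (u₁ + u₂) (v₁ + v₂) := M_le _ _
      _ ≤ P u₁ v₁ + P u₂ v₂ := key
      _ ≤ (M u₁ + ε/2) + (M u₂ + ε/2) := add_le_add hv₁.le hv₂.le
      _ = M u₁ + M u₂ + ε := by ring
  have P_smul : ∀ (c : ℝ), 0 < c → ∀ u v, P (c • u) (c • v) = c * P u v := by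
    intro c hc u v
    have e1 : c • u - c • v = c • (u - v) := by module
    have e2 : c • v - c • u = c • (v - u) := by module
    simp only [hP, e1, e2, hom₁ c hc, hom₂ c hc, real_inner_smul_right]
    ring
  have M_hom_le : ∀ (c : ℝ), 0 < c → ∀ u, M (c • u) ≤ c * M u := by
    intro c hc u
    rw [← div_le_iff₀' hc]
    refine le_M u _ fun v => ?_
    rw [div_le_iff₀' hc, ← P_smul c hc u v]
    exact M_le _ _
  have M_hom : ∀ (c : ℝ), 0 < c → ∀ u, M (c • u) = c * M u := by
    intro c hc u
    refine le_antisymm (M_hom_le c hc u) ?_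
    have h := M_hom_le c⁻¹ (by positivity) (c • u)
    rw [smul_smul, inv_mul_cancel₀ (ne_of_gt hc), one_smul] at h
    calc c * M u ≤ c * (c⁻¹ * M (c • u)) := mul_le_mul_of_nonneg_left h hc.le
      _ = M (c • u) := by field_simp
  obtain ⟨ξ₁, hξ₁⟩ := exists_vec_le_sublinear M M_hom M_add
  refine ⟨ξ₁, ξ - ξ₁, fun u => (hξ₁ u).trans (M_le1 u), fun u => ?_, by abel⟩
  have h := (hξ₁ (-u)).trans (M_le2 (-u))
  rw [inner_neg_right, inner_neg_right, neg_neg] at h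
  rw [inner_sub_left]
  linarith

lemma hb_split_sum {m : ℕ} (p : Fin m → EuclideanSpace ℝ (Fin n) → ℝ)
    (hom : ∀ j, ∀ c : ℝ, 0 < c → ∀ u, p j (c • u) = c * p j u)
    (add : ∀ j, ∀ u v, p j (u + v) ≤ p j u + p j v)
    (s : Finset (Fin m)) :
    ∀ ξ : EuclideanSpace ℝ (Fin n), (∀ u, ⟪ξ, u⟫ ≤ ∑ j ∈ s, p j u) →
    ∃ η : Fin m → EuclideanSpace ℝ (Fin n),
      (∀ j ∈ s, ∀ u, ⟪η j, u⟫ ≤ p j u) ∧ ∑ j ∈ s, η j = ξ := by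
  classical
  induction s using Finset.induction_on with
  | empty =>
    intro ξ hξ
    have : ξ = 0 := by
      have h := hξ ξ
      simp only [Finset.sum_empty] at h
      have h2 : ⟪ξ, ξ⟫ = 0 := le_antisymm h real_inner_self_nonneg
      exact inner_self_eq_zero.mp h2
    exact ⟨fun _ => 0, by simp, by simp [this]⟩
  | insert a s ha ih =>
    intro ξ hξ
    have hξ' : ∀ u, ⟪ξ, u⟫ ≤ p a u + ∑ j ∈ s, p j u := by
      intro u; have := hξ u; rwa [Finset.sum_insert ha] at this
    obtain ⟨ξ₁, ξ₂, h1, h2, h12⟩ := hb_split (p a) (fun u => ∑ j ∈ s, p j u)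
      (hom a) (add a)
      (by intro c hc u; rw [Finset.mul_sum]; exact Finset.sum_congr rfl fun j _ => hom j c hc u)
      (by intro u v
          calc ∑ j ∈ s, p j (u + v) ≤ ∑ j ∈ s, (p j u + p j v) :=
                Finset.sum_le_sum fun j _ => add j u v
            _ = _ := Finset.sum_add_distrib)
      ξ hξ'
    obtain ⟨η', hη', hsum⟩ := ih ξ₂ h2
    refine ⟨Function.update η' a ξ₁, ?_, ?_⟩
    · intro j hj u
      rcases Finset.mem_insert.mp hj with rfl | hmem
      · rw [Function.update_self]; exact h1 u
      · have hne : j ≠ a := fun hja => ha (hja ▸ hmem)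
        rw [Function.update_of_ne hne]; exact hη' j hmem u
    · rw [Finset.sum_insert ha, Function.update_self]
      have hsum2 : ∑ j ∈ s, Function.update η' a ξ₁ j = ∑ j ∈ s, η' j :=
        Finset.sum_congr rfl fun j hjs =>
          Function.update_of_ne (by rintro rfl; exact ha hjs) _ _
      rw [hsum2, hsum, h12]

end HB

section Quad

variable {n m : ℕ}

lemma mquad_expand (B : Matrix (Fin n) (Fin n) ℝ) (a b : ℝ) (u v : EuclideanSpace ℝ (Fin n)) :
    mquad B (a • u + b • v) =
      a ^ 2 * mquad B u + a * b * ⟪u, Matrix.toEuclideanLin B v⟫ +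
        a * b * ⟪v, Matrix.toEuclideanLin B u⟫ + b ^ 2 * mquad B v := by
  simp only [mquad, map_add, map_smul, inner_add_left, inner_add_right,
    real_inner_smul_left, real_inner_smul_right]
  ring

lemma mquad_nonneg {B : Matrix (Fin n) (Fin n) ℝ}
    (hB : ∀ v : EuclideanSpace ℝ (Fin n), v ≠ 0 → 0 < mquad B v)
    (v : EuclideanSpace ℝ (Fin n)) : 0 ≤ mquad B v := by
  rcases eq_or_ne v 0 with rfl | hv
  · simp [mquad]
  · exact (hB v hv).le

lemma mquad_convex {B : Matrix (Fin n) (Fin n) ℝ}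
    (h : ∀ v : EuclideanSpace ℝ (Fin n), 0 ≤ mquad B v) :
    ConvexOn ℝ Set.univ (mquad B) := by
  refine ⟨convex_univ, fun u _ v _ a b ha hb hab => ?_⟩
  have e1 := mquad_expand B a b u v
  have e2 := mquad_expand B 1 (-1) u v
  rw [one_smul, neg_one_smul, ← sub_eq_add_neg] at e2
  have h5 : 0 ≤ a * b * mquad B (u - v) := mul_nonneg (mul_nonneg ha hb) (h _)
  have hb' : b = 1 - a := by linarith
  simp only [smul_eq_mul]
  have key : a * mquad B u + b * mquad B v - mquad B (a • u + b • v) = a * b * mquad B (u - v) := by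
    rw [e1, e2, hb']; ring
  linarith [h5, key]

lemma toEuclideanLin_symm {B : Matrix (Fin n) (Fin n) ℝ} (h : B.IsSymm) :
    ∀ u v : EuclideanSpace ℝ (Fin n),
      ⟪Matrix.toEuclideanLin B u, v⟫ = ⟪u, Matrix.toEuclideanLin B v⟫ := by
  have herm : B.IsHermitian := by
    rwa [Matrix.IsHermitian, Matrix.conjTranspose_eq_transpose_of_trivial]
  exact Matrix.isHermitian_iff_isSymmetric.mp herm

lemma mquad_line {B : Matrix (Fin n) (Fin n) ℝ} (hsym : B.IsSymm)
    (d u : EuclideanSpace ℝ (Fin n)) (t : ℝ) :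
    mquad B (d + t • u) =
      mquad B d + 2 * t * ⟪Matrix.toEuclideanLin B d, u⟫ + t ^ 2 * mquad B u := by
  have e := mquad_expand B 1 t d u
  rw [one_smul] at e
  have h1 : ⟪d, Matrix.toEuclideanLin B u⟫ = ⟪Matrix.toEuclideanLin B d, u⟫ :=
    (toEuclideanLin_symm hsym d u).symm
  have h2 : ⟪u, Matrix.toEuclideanLin B d⟫ = ⟪Matrix.toEuclideanLin B d, u⟫ :=
    real_inner_comm _ _
  rw [e, h1, h2]; ring

lemma convexOn_weighted_sum (lam : Fin m → ℝ) (g : Fin m → EuclideanSpace ℝ (Fin n) → ℝ)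
    (hlam : ∀ j, 0 ≤ lam j) (hg : ∀ j, ConvexOn ℝ Set.univ (g j)) :
    ConvexOn ℝ Set.univ (fun z => ∑ j, lam j * g j z) := by
  refine ⟨convex_univ, fun u _ v _ a b ha hb hab => ?_⟩
  simp only [smul_eq_mul]
  calc ∑ j, lam j * g j (a • u + b • v) ≤ ∑ j, lam j * (a * g j u + b * g j v) := by
        refine Finset.sum_le_sum fun j _ => mul_le_mul_of_nonneg_left ?_ (hlam j)
        simpa [smul_eq_mul] using (hg j).2 (Set.mem_univ u) (Set.mem_univ v) ha hb hab
    _ = a * ∑ j, lam j * g j u + b * ∑ j, lam j * g j v := by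
        rw [Finset.mul_sum, Finset.mul_sum, ← Finset.sum_add_distrib]
        exact Finset.sum_congr rfl fun j _ => by ring

lemma dq_weighted_sum (lam : Fin m → ℝ) (g : Fin m → EuclideanSpace ℝ (Fin n) → ℝ)
    (y u : EuclideanSpace ℝ (Fin n)) (t : ℝ) :
    dq (fun z => ∑ j, lam j * g j z) y u t = ∑ j, lam j * dq (g j) y u t := by
  simp only [dq, ← Finset.sum_sub_distrib, Finset.sum_div]
  exact Finset.sum_congr rfl fun j _ => by ring

lemma Dd_combo [Nonempty (Fin m)] (lam : Fin m → ℝ) (g : Fin m → EuclideanSpace ℝ (Fin n) → ℝ)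
    (hlam : ∀ j, 0 ≤ lam j) (hsum : ∑ j, lam j = 1)
    (hg : ∀ j, ConvexOn ℝ Set.univ (g j)) (y u : EuclideanSpace ℝ (Fin n)) :
    Dd (fun z => ∑ j, lam j * g j z) y u ≤ ∑ j, lam j * Dd (g j) y u := by
  have hGconv := convexOn_weighted_sum lam g hlam hg
  refine le_of_forall_pos_le_add fun ε hε => ?_
  have hch : ∀ j, ∃ t : ℝ, 0 < t ∧ dq (g j) y u t < Dd (g j) y u + ε :=
    fun j => Dd_exists_lt y u hε
  choose tf htpos hlt using hch
  set t := Finset.univ.inf' Finset.univ_nonempty tf with htdef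
  have ht : 0 < t := (Finset.lt_inf'_iff _).mpr fun j _ => htpos j
  have hle : ∀ j, t ≤ tf j := fun j => Finset.inf'_le _ (Finset.mem_univ j)
  calc Dd (fun z => ∑ j, lam j * g j z) y u
      ≤ dq (fun z => ∑ j, lam j * g j z) y u t := Dd_le_dq hGconv y u ht
    _ = ∑ j, lam j * dq (g j) y u t := dq_weighted_sum lam g y u t
    _ ≤ ∑ j, lam j * (Dd (g j) y u + ε) := by
        refine Finset.sum_le_sum fun j _ => mul_le_mul_of_nonneg_left ?_ (hlam j)
        exact ((dq_mono (hg j) y u ht (hle j)).trans (hlt j).le)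
    _ = ∑ j, lam j * Dd (g j) y u + ε := by
        simp only [mul_add, Finset.sum_add_distrib, ← Finset.sum_mul, hsum, one_mul]

end Quad



section Sep

variable {n m : ℕ}

lemma exists_simplex_weights [Nonempty (Fin m)]
    (Q : Fin m → EuclideanSpace ℝ (Fin n) → ℝ)
    (hconv : ∀ j, ConvexOn ℝ Set.univ (Q j))
    (θ : ℝ) (hθd : ∀ d, ∃ j, θ ≤ Q j d) :
    ∃ lam : Fin m → ℝ, (∀ j, 0 ≤ lam j) ∧ (∑ j, lam j = 1) ∧
      ∀ d, θ ≤ ∑ j, lam j * Q j d := by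
  classical
  set S : Set (Fin m → ℝ) := {y | ∃ d, ∀ j, Q j d - θ < y j} with hS
  set T : Set (Fin m → ℝ) := {y | ∀ j, y j ≤ 0} with hT
  have hSopen : IsOpen S := by
    have hrw : S = ⋃ d, ⋂ j, (fun y : Fin m → ℝ => y j) ⁻¹' Set.Ioi (Q j d - θ) := by
      ext y
      simp [hS, Set.mem_iUnion, Set.mem_iInter]
    rw [hrw]
    exact isOpen_iUnion fun d => isOpen_iInter_of_finite fun j =>
      isOpen_Ioi.preimage (continuous_apply j)
  have hSconv : Convex ℝ S := by
    rintro y₁ ⟨d₁, h₁⟩ y₂ ⟨d₂, h₂⟩ a b ha hb hab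
    rcases eq_or_lt_of_le ha with rfl | ha'
    · have hb1 : b = 1 := by linarith
      subst hb1
      simpa using ⟨d₂, h₂⟩
    rcases eq_or_lt_of_le hb with rfl | hb'
    · have ha1 : a = 1 := by linarith
      subst ha1
      simpa using ⟨d₁, h₁⟩
    refine ⟨a • d₁ + b • d₂, fun j => ?_⟩
    have hc := (hconv j).2 (Set.mem_univ d₁) (Set.mem_univ d₂) ha hb hab
    simp only [smul_eq_mul] at hc
    have hy : (a • y₁ + b • y₂) j = a * y₁ j + b * y₂ j := by
      simp [Pi.add_apply, Pi.smul_apply, smul_eq_mul]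
    rw [hy]
    have k1 : a * (Q j d₁ - θ) < a * y₁ j := mul_lt_mul_of_pos_left (h₁ j) ha'
    have k2 : b * (Q j d₂ - θ) < b * y₂ j := mul_lt_mul_of_pos_left (h₂ j) hb'
    have hθab : a * θ + b * θ = θ := by rw [← add_mul, hab, one_mul]
    nlinarith [hc, k1, k2]
  have hTconv : Convex ℝ T := by
    rintro y₁ h₁ y₂ h₂ a b ha hb hab j
    have e1 : a * y₁ j ≤ 0 := by
      have := mul_le_mul_of_nonneg_left (h₁ j) ha; simpa using this
    have e2 : b * y₂ j ≤ 0 := by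
      have := mul_le_mul_of_nonneg_left (h₂ j) hb; simpa using this
    have : (a • y₁ + b • y₂) j = a * y₁ j + b * y₂ j := by
      simp [Pi.add_apply, Pi.smul_apply, smul_eq_mul]
    rw [this]; linarith
  have hdisj : Disjoint S T := by
    rw [Set.disjoint_left]
    rintro y ⟨d, hd⟩ hyT
    obtain ⟨j, hj⟩ := hθd d
    have h1 := hd j
    have h2 := hyT j
    linarith
  obtain ⟨φ, u, hφS, hφT⟩ := geometric_hahn_banach_open hSconv hSopen hTconv hdisj
  have hu0 : u ≤ 0 := by
    have h0T : (0 : Fin m → ℝ) ∈ T := fun j => le_rfl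
    have := hφT 0 h0T
    simpa using this
  set F : Fin m → ℝ := fun j => φ (Pi.single j 1) with hF
  have hrep : ∀ y : Fin m → ℝ, φ y = ∑ j, y j * F j := by
    intro y
    have hfun : ∀ i : Fin m, (fun j => if i = j then (1:ℝ) else 0) = Pi.single i 1 := by
      intro i; funext k; simp [Pi.single_apply, eq_comm]
    have h0 := LinearMap.pi_apply_eq_sum_univ (φ : (Fin m → ℝ) →ₗ[ℝ] ℝ) y
    simp only [ContinuousLinearMap.coe_coe] at h0
    rw [h0]
    exact Finset.sum_congr rfl fun i _ => by rw [hfun i, smul_eq_mul, hF]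
  set lam' : Fin m → ℝ := fun j => -F j with hlam'
  have hlamnn : ∀ j, 0 ≤ lam' j := by
    intro j
    have key : ∀ t : ℝ, 0 < t → u ≤ t * lam' j := by
      intro t ht
      have hmem : Pi.single j (-t) ∈ T := by
        intro k
        rcases eq_or_ne k j with rfl | hk
        · simp; linarith
        · simp [Pi.single_apply, hk]
      have h2 := hφT _ hmem
      have h3 : (Pi.single j (-t) : Fin m → ℝ) = (-t) • (Pi.single j 1 : Fin m → ℝ) := by
        funext k
        by_cases hk : k = j
        · subst hk; simp
        · simp [Pi.single_apply, hk]
      rw [h3, map_smul, smul_eq_mul] at h2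
      calc u ≤ -t * F j := h2
        _ = t * lam' j := by rw [hlam']; ring
    by_contra hneg
    push_neg at hneg
    have h1 := key 1 one_pos
    rw [one_mul] at h1
    have hu : u < 0 := lt_of_le_of_lt h1 hneg
    have ht2 : 0 < 2 * u / lam' j := div_pos_of_neg_of_neg (by linarith) hneg
    have h2 := key _ ht2
    rw [div_mul_cancel₀ _ (ne_of_lt hneg)] at h2
    linarith
  have hy0S : (fun j => Q j 0 - θ + 1) ∈ S :=
    ⟨0, fun j => by show Q j 0 - θ < Q j 0 - θ + 1; linarith⟩
  set c := ∑ j, lam' j with hc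
  have hcnn : 0 ≤ c := Finset.sum_nonneg fun j _ => hlamnn j
  have hcpos : 0 < c := by
    rcases lt_or_eq_of_le hcnn with h | h
    · exact h
    · exfalso
      have hall : ∀ j ∈ Finset.univ, lam' j = 0 :=
        (Finset.sum_eq_zero_iff_of_nonneg fun j _ => hlamnn j).mp h.symm
      have hφ0 : φ (fun j => Q j 0 - θ + 1) = 0 := by
        rw [hrep]
        refine Finset.sum_eq_zero fun j _ => ?_
        have : F j = 0 := by
          have := hall j (Finset.mem_univ j); simp only [hlam'] at this; linarith
        rw [this, mul_zero]
      have := hφS _ hy0S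
      rw [hφ0] at this
      linarith
  refine ⟨fun j => lam' j / c, fun j => div_nonneg (hlamnn j) hcnn, ?_, ?_⟩
  · rw [← Finset.sum_div, ← hc, div_self (ne_of_gt hcpos)]
  · intro d
    have hstep : ∀ ε : ℝ, 0 < ε → -(ε * c) < ∑ j, lam' j * (Q j d - θ) := by
      intro ε hε
      have hyS : (fun j => Q j d - θ + ε) ∈ S :=
        ⟨d, fun j => by show Q j d - θ < Q j d - θ + ε; linarith⟩
      have h2 := hφS _ hyS
      rw [hrep] at h2
      have h3 : ∑ j, (Q j d - θ + ε) * F j = -(∑ j, lam' j * (Q j d - θ) + ε * c) := by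
        rw [hc, Finset.mul_sum, ← Finset.sum_add_distrib, ← Finset.sum_neg_distrib]
        exact Finset.sum_congr rfl fun j _ => by rw [hlam']; ring
      rw [h3] at h2
      linarith
    have hnonneg : 0 ≤ ∑ j, lam' j * (Q j d - θ) := by
      by_contra hneg
      push_neg at hneg
      set X := ∑ j, lam' j * (Q j d - θ) with hX
      have hε : 0 < -X / (2 * c) := div_pos (by linarith) (by linarith)
      have h2 := hstep _ hε
      have h4 : -X / (2 * c) * c = -X / 2 := by field_simp
      rw [h4] at h2
      linarith
    have hexp : ∑ j, lam' j / c * Q j d - θ = (∑ j, lam' j * (Q j d - θ)) / c := by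
      rw [Finset.sum_div]
      have h5 : ∑ j, lam' j / c * Q j d - θ = ∑ j, (lam' j / c * Q j d - lam' j / c * θ) := by
        rw [Finset.sum_sub_distrib]
        have h6 : ∑ j, lam' j / c * θ = θ := by
          rw [← Finset.sum_mul, ← Finset.sum_div, ← hc, div_self (ne_of_gt hcpos), one_mul]
        rw [h6]
      rw [h5]
      exact Finset.sum_congr rfl fun j _ => by ring
    have := div_nonneg hnonneg hcnn
    linarith [hexp ▸ this]

end Sep

section QjConv

variable {n m : ℕ}

lemma Qj_convex (f g : Fin m → EuclideanSpace ℝ (Fin n) → ℝ)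
    (B : Fin m → Matrix (Fin n) (Fin n) ℝ)
    (hgconv : ∀ j, ConvexOn ℝ Set.univ (g j))
    (hBpd : ∀ j, ∀ v : EuclideanSpace ℝ (Fin n), v ≠ 0 → 0 < mquad (B j) v)
    (x : EuclideanSpace ℝ (Fin n)) (j : Fin m) :
    ConvexOn ℝ Set.univ (fun d => Qj f g B x d j) := by
  have hquad := mquad_convex (mquad_nonneg (hBpd j))
  have c2 : ConvexOn ℝ Set.univ (fun d => 1 / 2 * mquad (B j) d) := by
    simpa [smul_eq_mul] using hquad.smul (by norm_num : (0:ℝ) ≤ 1/2)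
  have c1 : ConvexOn ℝ Set.univ
      (fun d : EuclideanSpace ℝ (Fin n) => ⟪gradient (f j) x, d⟫) := by
    refine ⟨convex_univ, fun u _ v _ a b _ _ _ => ?_⟩
    show ⟪gradient (f j) x, a • u + b • v⟫ ≤
      a • ⟪gradient (f j) x, u⟫ + b • ⟪gradient (f j) x, v⟫
    rw [inner_add_right, real_inner_smul_right, real_inner_smul_right,
      smul_eq_mul, smul_eq_mul]
  have c3 : ConvexOn ℝ Set.univ (fun d => g j (x + d)) := by
    have h := (hgconv j).comp_affineMap
      (AffineEquiv.constVAdd ℝ (EuclideanSpace ℝ (Fin n)) x).toAffineMap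
    have heq : (g j ∘ (AffineEquiv.constVAdd ℝ (EuclideanSpace ℝ (Fin n)) x).toAffineMap)
        = fun d => g j (x + d) := by
      funext d
      rfl
    rw [heq] at h
    simpa using h
  have c4 : ConvexOn ℝ Set.univ (fun _ : EuclideanSpace ℝ (Fin n) => -(g j x)) :=
    convexOn_const _ convex_univ
  have hadd := ((c1.add c2).add c3).add c4
  have heq2 : (fun d => Qj f g B x d j) =
      ((((fun d : EuclideanSpace ℝ (Fin n) => ⟪gradient (f j) x, d⟫) +
        fun d => 1 / 2 * mquad (B j) d) + fun d => g j (x + d)) +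
        fun _ => -(g j x)) := by
    funext d
    simp [Qj, sub_eq_add_neg]
  rw [heq2]
  exact hadd

end QjConv

/-- KKT conditions at a minimizer of `Q(x,·)`: there exist `λ ∈ Δ_m` and
subgradients `ξ_j ∈ ∂g_j(x+d*)` with `Σ λ_j(∇f_j(x) + B_j d* + ξ_j) = 0`,
`Q_j(x,d*) ≤ θ` for all `j`, and `λ_j (Q_j(x,d*) − θ) = 0` for all `j`. -/
theorem kkt_of_minimizer
    (n m : ℕ) (hn : 1 ≤ n) (hm : 1 ≤ m)
    (f g : Fin m → EuclideanSpace ℝ (Fin n) → ℝ)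
    (hfconv : ∀ j, ConvexOn ℝ Set.univ (f j))
    (hfdiff : ∀ j, ContDiff ℝ 1 (f j))
    (hgconv : ∀ j, ConvexOn ℝ Set.univ (g j))
    (hgcont : ∀ j, Continuous (g j))
    (B : Fin m → Matrix (Fin n) (Fin n) ℝ)
    (hBsymm : ∀ j, (B j).IsSymm)
    (hBpd : ∀ j, ∀ v : EuclideanSpace ℝ (Fin n), v ≠ 0 → 0 < mquad (B j) v)
    (x dstar : EuclideanSpace ℝ (Fin n))
    (hmin : ∀ e, Qmax f g B x dstar ≤ Qmax f g B x e)
    (θ : ℝ) (hθ : θ = Qmax f g B x dstar) :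
    ∃ (lam : Fin m → ℝ) (ξ : Fin m → EuclideanSpace ℝ (Fin n)),
      (∀ j, 0 ≤ lam j) ∧ (∑ j, lam j = 1) ∧
      (∀ j, IsSubgradAt (g j) (x + dstar) (ξ j)) ∧
      (∑ j, lam j • (gradient (f j) x + Matrix.toEuclideanLin (B j) dstar + ξ j)) = 0 ∧
      (∀ j, Qj f g B x dstar j ≤ θ) ∧
      (∀ j, lam j * (Qj f g B x dstar j - θ) = 0) := by
  classical
  haveI : Nonempty (Fin m) := Fin.pos_iff_nonempty.mp hm
  have hQled : ∀ j, Qj f g B x dstar j ≤ θ := by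
    intro j
    rw [hθ]
    exact le_ciSup (Set.Finite.bddAbove (Set.finite_range _)) j
  have hθd : ∀ d, ∃ j, θ ≤ Qj f g B x d j := by
    intro d
    obtain ⟨j, hj⟩ := exists_eq_ciSup_of_finite (f := fun j => Qj f g B x d j)
    refine ⟨j, ?_⟩
    rw [hθ]
    calc Qmax f g B x dstar ≤ Qmax f g B x d := hmin d
      _ = Qj f g B x d j := by rw [Qmax, ← hj]
  obtain ⟨lam, hlam0, hlam1, hkey⟩ := exists_simplex_weights
    (fun j d => Qj f g B x d j) (fun j => Qj_convex f g B hgconv hBpd x j) θ hθd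
  have hterm_nonpos : ∀ j ∈ Finset.univ, lam j * (Qj f g B x dstar j - θ) ≤ 0 := by
    intro j _
    have h := mul_le_mul_of_nonneg_left (sub_nonpos.mpr (hQled j)) (hlam0 j)
    simpa using h
  have hθsum : ∑ j, lam j * θ = θ := by rw [← Finset.sum_mul, hlam1, one_mul]
  have hsum_ge : 0 ≤ ∑ j, lam j * (Qj f g B x dstar j - θ) := by
    have h1 := hkey dstar
    simp only [mul_sub, Finset.sum_sub_distrib, hθsum]
    linarith
  have hsum0 : ∑ j, lam j * (Qj f g B x dstar j - θ) = 0 :=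
    le_antisymm (Finset.sum_nonpos hterm_nonpos) hsum_ge
  have hslack : ∀ j, lam j * (Qj f g B x dstar j - θ) = 0 := fun j =>
    (Finset.sum_eq_zero_iff_of_nonpos hterm_nonpos).mp hsum0 j (Finset.mem_univ j)
  have hφdstar : ∑ j, lam j * Qj f g B x dstar j = θ := by
    have h2 := hsum0
    simp only [mul_sub, Finset.sum_sub_distrib, hθsum] at h2
    linarith
  set G : EuclideanSpace ℝ (Fin n) → ℝ := fun z => ∑ j, lam j * g j z with hG
  have hGconv : ConvexOn ℝ Set.univ G := convexOn_weighted_sum lam g hlam0 hgconv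
  set v : EuclideanSpace ℝ (Fin n) :=
    ∑ j, lam j • (gradient (f j) x + Matrix.toEuclideanLin (B j) dstar) with hv
  set qq : EuclideanSpace ℝ (Fin n) → ℝ := fun u => ∑ j, lam j * mquad (B j) u with hqq
  have hqqnn : ∀ u, 0 ≤ qq u := fun u =>
    Finset.sum_nonneg fun j _ => mul_nonneg (hlam0 j) (mquad_nonneg (hBpd j) u)
  have hvinner : ∀ u, ⟪v, u⟫ = ∑ j, lam j *
      (⟪gradient (f j) x, u⟫ + ⟪Matrix.toEuclideanLin (B j) dstar, u⟫) := by
    intro u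
    rw [hv, sum_inner]
    exact Finset.sum_congr rfl fun j _ => by
      rw [real_inner_smul_left, inner_add_left]
  have hquot : ∀ u, ∀ t : ℝ, 0 < t →
      ⟪-v, u⟫ - t / 2 * qq u ≤ dq G (x + dstar) u t := by
    intro u t ht
    have hQd : ∀ j, Qj f g B x (dstar + t • u) j - Qj f g B x dstar j =
        t * (⟪gradient (f j) x, u⟫ + ⟪Matrix.toEuclideanLin (B j) dstar, u⟫) +
          t ^ 2 / 2 * mquad (B j) u + (g j (x + dstar + t • u) - g j (x + dstar)) := by
      intro j
      have harg : x + (dstar + t • u) = x + dstar + t • u := (add_assoc x dstar (t • u)).symm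
      rw [Qj, Qj, harg, mquad_line (hBsymm j) dstar u t, inner_add_right,
        real_inner_smul_right]
      ring
    have h0 : 0 ≤ ∑ j, lam j * (Qj f g B x (dstar + t • u) j - Qj f g B x dstar j) := by
      have h1 := hkey (dstar + t • u)
      simp only [mul_sub, Finset.sum_sub_distrib, hφdstar]
      linarith
    have hexp : ∑ j, lam j * (Qj f g B x (dstar + t • u) j - Qj f g B x dstar j)
        = t * ⟪v, u⟫ + t ^ 2 / 2 * qq u + (G (x + dstar + t • u) - G (x + dstar)) := by
      have e1 : ∑ j, lam j * (Qj f g B x (dstar + t • u) j - Qj f g B x dstar j)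
          = ∑ j, (t * (lam j * (⟪gradient (f j) x, u⟫ +
              ⟪Matrix.toEuclideanLin (B j) dstar, u⟫))
            + t ^ 2 / 2 * (lam j * mquad (B j) u)
            + (lam j * g j (x + dstar + t • u) - lam j * g j (x + dstar))) :=
        Finset.sum_congr rfl fun j _ => by rw [hQd j]; ring
      rw [e1]
      simp only [Finset.sum_add_distrib, Finset.sum_sub_distrib, ← Finset.mul_sum]
      rw [hvinner u]
    rw [hexp] at h0
    have hGt : G (x + dstar + t • u) - G (x + dstar) = t * dq G (x + dstar) u t := by
      rw [dq]
      field_simp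
    rw [hGt] at h0
    have h2 : 0 ≤ ⟪v, u⟫ + t / 2 * qq u + dq G (x + dstar) u t := by
      by_contra hcon
      push_neg at hcon
      have h3 := mul_neg_of_pos_of_neg ht hcon
      nlinarith [h0]
    rw [inner_neg_left]
    linarith
  have hDG : ∀ u, ⟪-v, u⟫ ≤ Dd G (x + dstar) u := by
    intro u
    refine le_of_forall_pos_le_add fun ε hε => ?_
    have hq1 : 0 < qq u + 1 := by linarith [hqqnn u]
    set t₀ : ℝ := 2 * ε / (qq u + 1) with ht₀
    have ht₀pos : 0 < t₀ := by positivity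
    have ht₀qq : t₀ / 2 * qq u ≤ ε := by
      rw [show t₀ / 2 * qq u = ε * qq u / (qq u + 1) from by rw [ht₀]; ring,
        div_le_iff₀ hq1]
      nlinarith [hε.le, hqqnn u]
    have hbound : ⟪-v, u⟫ - ε ≤ Dd G (x + dstar) u := by
      refine le_Dd (x + dstar) u fun t ht => ?_
      rcases le_or_gt t t₀ with hle | hlt
      · have h1 := hquot u t ht
        have h2 : t / 2 * qq u ≤ t₀ / 2 * qq u :=
          mul_le_mul_of_nonneg_right (by linarith) (hqqnn u)
        linarith
      · have h1 := hquot u t₀ ht₀pos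
        have h2 := dq_mono hGconv (x + dstar) u ht₀pos hlt.le
        linarith
    linarith
  have hDsum : ∀ u, ⟪-v, u⟫ ≤ ∑ j, lam j * Dd (g j) (x + dstar) u := fun u =>
    (hDG u).trans (Dd_combo lam g hlam0 hlam1 hgconv (x + dstar) u)
  obtain ⟨η, hη, hηsum⟩ := hb_split_sum (fun j u => lam j * Dd (g j) (x + dstar) u)
    (fun j c hc u => by
      show lam j * Dd (g j) (x + dstar) (c • u) = c * (lam j * Dd (g j) (x + dstar) u)
      rw [Dd_smul (hgconv j) (x + dstar) u hc]; ring)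
    (fun j u w => by
      show lam j * Dd (g j) (x + dstar) (u + w) ≤
        lam j * Dd (g j) (x + dstar) u + lam j * Dd (g j) (x + dstar) w
      have h1 := Dd_subadd (hgconv j) (x + dstar) u w
      calc lam j * Dd (g j) (x + dstar) (u + w)
          ≤ lam j * (Dd (g j) (x + dstar) u + Dd (g j) (x + dstar) w) :=
            mul_le_mul_of_nonneg_left h1 (hlam0 j)
        _ = lam j * Dd (g j) (x + dstar) u + lam j * Dd (g j) (x + dstar) w := by ring)
    Finset.univ (-v) hDsum
  have hζex : ∀ j, ∃ ζ : EuclideanSpace ℝ (Fin n), ∀ u, ⟪ζ, u⟫ ≤ Dd (g j) (x + dstar) u :=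
    fun j => exists_vec_le_sublinear (Dd (g j) (x + dstar))
      (fun c hc u => Dd_smul (hgconv j) (x + dstar) u hc)
      (fun u w => Dd_subadd (hgconv j) (x + dstar) u w)
  choose ζ hζ using hζex
  set ξv : Fin m → EuclideanSpace ℝ (Fin n) := fun j =>
    if lam j = 0 then ζ j else (lam j)⁻¹ • η j with hξdef
  have hξsub : ∀ j, ∀ u, ⟪ξv j, u⟫ ≤ Dd (g j) (x + dstar) u := by
    intro j u
    rw [hξdef]
    by_cases h : lam j = 0
    · simp only [if_pos h]
      exact hζ j u
    · simp only [if_neg h]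
      have h1 := hη j (Finset.mem_univ j) u
      calc ⟪(lam j)⁻¹ • η j, u⟫ = (lam j)⁻¹ * ⟪η j, u⟫ := real_inner_smul_left _ _ _
        _ ≤ (lam j)⁻¹ * (lam j * Dd (g j) (x + dstar) u) :=
            mul_le_mul_of_nonneg_left h1 (inv_nonneg.mpr (hlam0 j))
        _ = Dd (g j) (x + dstar) u := by field_simp
  have hsmul : ∀ j, lam j • ξv j = η j := by
    intro j
    rw [hξdef]
    by_cases h : lam j = 0
    · simp only [if_pos h, h, zero_smul]
      have h1 := hη j (Finset.mem_univ j) (η j)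
      rw [h, zero_mul] at h1
      have h2 : ⟪η j, η j⟫ = 0 := le_antisymm h1 real_inner_self_nonneg
      exact (inner_self_eq_zero.mp h2).symm
    · simp only [if_neg h, smul_smul, mul_inv_cancel₀ h, one_smul]
  refine ⟨lam, ξv, hlam0, hlam1, ?_, ?_, hQled, hslack⟩
  · intro j
    exact Dd_subgrad (hgconv j) (hξsub j)
  · have hsplit : ∑ j, lam j • (gradient (f j) x + Matrix.toEuclideanLin (B j) dstar + ξv j)
        = v + ∑ j, lam j • ξv j := by
      rw [hv, ← Finset.sum_add_distrib]
      exact Finset.sum_congr rfl fun j _ =>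
        smul_add (lam j) (gradient (f j) x + Matrix.toEuclideanLin (B j) dstar) (ξv j)
    rw [hsplit]
    have h2 : ∑ j, lam j • ξv j = -v := by
      rw [← hηsum]
      exact Finset.sum_congr rfl fun j _ => hsmul j
    rw [h2]
    abel

end NPQN
end
end

section
/- Let x, d ∈ ℝⁿ, θ ∈ ℝ, λ ∈ Δ_m, and ξ_j ∈ ∂g_j(x+d) for j = 1,…,m satisfy Σ_{j=1}^m λ_j(∇f_j(x) + B_j d + ξ_j) = 0, Q_j(x,d) ≤ θ for all j, and λ_j(Q_j(x,d) − θ) = 0 for all j. Then θ ≤ −(1/2) Σ_{j=1}^m λ_j ⟨d, B_j d⟩. If moreover σ > 0 and B_j ⪰ σI for all j, then θ ≤ −(σ/2)‖d‖². -/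
open Filter Topology
open scoped RealInnerProductSpace BigOperators

noncomputable section

namespace NPQN

variable {n m : ℕ}

/-- If `(d, θ, λ, ξ)` satisfy the KKT conditions, then
`θ ≤ −(1/2) Σ_j λ_j ⟨d, B_j d⟩`; if moreover `B_j ⪰ σI` for all `j` with `σ > 0`,
then `θ ≤ −(σ/2)‖d‖²`. -/
theorem theta_bound_from_kkt
    (n m : ℕ) (hn : 1 ≤ n) (hm : 1 ≤ m)
    (f g : Fin m → EuclideanSpace ℝ (Fin n) → ℝ)
    (hfconv : ∀ j, ConvexOn ℝ Set.univ (f j))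
    (hfdiff : ∀ j, ContDiff ℝ 1 (f j))
    (hgconv : ∀ j, ConvexOn ℝ Set.univ (g j))
    (hgcont : ∀ j, Continuous (g j))
    (B : Fin m → Matrix (Fin n) (Fin n) ℝ)
    (hBsymm : ∀ j, (B j).IsSymm)
    (x d : EuclideanSpace ℝ (Fin n)) (θ : ℝ)
    (lam : Fin m → ℝ) (hlam0 : ∀ j, 0 ≤ lam j) (hlam1 : ∑ j, lam j = 1)
    (ξ : Fin m → EuclideanSpace ℝ (Fin n))
    (hξ : ∀ j, IsSubgradAt (g j) (x + d) (ξ j))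
    (hstat : (∑ j, lam j • (gradient (f j) x + Matrix.toEuclideanLin (B j) d + ξ j)) = 0)
    (hle : ∀ j, Qj f g B x d j ≤ θ)
    (hcomp : ∀ j, lam j * (Qj f g B x d j - θ) = 0) :
    θ ≤ -(1 / 2) * ∑ j, lam j * mquad (B j) d ∧
    (∀ σ : ℝ, 0 < σ → (∀ j, MatGE (B j) σ) → θ ≤ -(σ / 2) * ‖d‖ ^ 2) := by
  have hθ : ∑ j, lam j * Qj f g B x d j = θ := by
    have h1 : ∑ j, lam j * (Qj f g B x d j - θ) = 0 :=
      Finset.sum_eq_zero (fun j _ => hcomp j)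
    have h2 : ∑ j, (lam j * Qj f g B x d j - lam j * θ) = 0 := by
      simpa [mul_sub] using h1
    rw [Finset.sum_sub_distrib, ← Finset.sum_mul, hlam1, one_mul] at h2
    linarith
  have hst : ∑ j, lam j * (⟪gradient (f j) x, d⟫ + mquad (B j) d + ⟪ξ j, d⟫) = 0 := by
    have h := congrArg (fun v : EuclideanSpace ℝ (Fin n) => ⟪v, d⟫) hstat
    simp only [sum_inner, real_inner_smul_left, inner_add_left, inner_zero_left] at h
    have : ∀ j : Fin m, ⟪Matrix.toEuclideanLin (B j) d, d⟫ = mquad (B j) d := by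
      intro j; rw [mquad, real_inner_comm]
    calc ∑ j, lam j * (⟪gradient (f j) x, d⟫ + mquad (B j) d + ⟪ξ j, d⟫)
        = ∑ j, lam j * (⟪gradient (f j) x, d⟫ + ⟪Matrix.toEuclideanLin (B j) d, d⟫ + ⟪ξ j, d⟫) := by
          apply Finset.sum_congr rfl; intro j _; rw [this j]
      _ = 0 := h
  have hsub : ∀ j, g j (x + d) - g j x ≤ ⟪ξ j, d⟫ := by
    intro j
    have h := hξ j x
    have he : ⟪ξ j, x - (x + d)⟫ = -⟪ξ j, d⟫ := by
      have : x - (x + d) = -d := by abel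
      rw [this, inner_neg_right]
    rw [he] at h
    linarith
  have hQle : ∀ j, Qj f g B x d j ≤ ⟪gradient (f j) x, d⟫ + (1 / 2) * mquad (B j) d + ⟪ξ j, d⟫ := by
    intro j
    have := hsub j
    unfold Qj
    linarith
  have hmain : θ ≤ -(1 / 2) * ∑ j, lam j * mquad (B j) d := by
    have h3 : ∑ j, lam j * Qj f g B x d j ≤
        ∑ j, lam j * (⟪gradient (f j) x, d⟫ + (1 / 2) * mquad (B j) d + ⟪ξ j, d⟫) :=
      Finset.sum_le_sum (fun j _ => mul_le_mul_of_nonneg_left (hQle j) (hlam0 j))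
    have h4 : ∑ j, lam j * (⟪gradient (f j) x, d⟫ + (1 / 2) * mquad (B j) d + ⟪ξ j, d⟫)
        = ∑ j, lam j * (⟪gradient (f j) x, d⟫ + mquad (B j) d + ⟪ξ j, d⟫)
          - (1 / 2) * ∑ j, lam j * mquad (B j) d := by
      rw [Finset.mul_sum, ← Finset.sum_sub_distrib]
      apply Finset.sum_congr rfl; intro j _; ring
    rw [h4, hst] at h3
    linarith [hθ ▸ h3]
  refine ⟨hmain, ?_⟩
  intro σ hσ hB
  have h5 : σ * ‖d‖ ^ 2 ≤ ∑ j, lam j * mquad (B j) d := by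
    calc σ * ‖d‖ ^ 2 = ∑ j, lam j * (σ * ‖d‖ ^ 2) := by
          rw [← Finset.sum_mul, hlam1, one_mul]
      _ ≤ ∑ j, lam j * mquad (B j) d :=
          Finset.sum_le_sum (fun j _ => mul_le_mul_of_nonneg_left (hB j d) (hlam0 j))
  have := hmain
  nlinarith

end NPQN
end
end

section
/- Suppose σ > 0 and B_j ⪰ σI for every j ∈ {1,…,m}. If d(x) is the minimizer of Q(x,·), then θ(x) = Q(x,d(x)) ≤ −(σ/2)‖d(x)‖². -/
open Filter Topology
open scoped RealInnerProductSpace BigOperators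

noncomputable section

namespace NPQN

variable {n m : ℕ}

/-- Suppose `σ > 0` and `B_j ⪰ σI` for every `j`. If `d(x)` minimizes
`Q(x,·)`, then `θ(x) = Q(x,d(x)) ≤ −(σ/2)‖d(x)‖²`. -/
theorem theta_le_neg_norm_sq
    (n m : ℕ) (hn : 1 ≤ n) (hm : 1 ≤ m)
    (f g : Fin m → EuclideanSpace ℝ (Fin n) → ℝ)
    (hfconv : ∀ j, ConvexOn ℝ Set.univ (f j))
    (hfdiff : ∀ j, ContDiff ℝ 1 (f j))
    (hgconv : ∀ j, ConvexOn ℝ Set.univ (g j))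
    (hgcont : ∀ j, Continuous (g j))
    (B : Fin m → Matrix (Fin n) (Fin n) ℝ)
    (hBsymm : ∀ j, (B j).IsSymm)
    (σ : ℝ) (hσ : 0 < σ)
    (hB : ∀ j, MatGE (B j) σ)
    (x d0 : EuclideanSpace ℝ (Fin n))
    (hd0min : ∀ d, Qmax f g B x d0 ≤ Qmax f g B x d) :
    theta f g B x = Qmax f g B x d0 ∧
    Qmax f g B x d0 ≤ -(σ / 2) * ‖d0‖ ^ 2 := by
  haveI : Nonempty (Fin m) := ⟨⟨0, by omega⟩⟩
  have hbdd : BddBelow (Set.range fun d => Qmax f g B x d) :=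
    ⟨Qmax f g B x d0, by rintro _ ⟨d, rfl⟩; exact hd0min d⟩
  have hpart1 : theta f g B x = Qmax f g B x d0 :=
    le_antisymm (ciInf_le hbdd d0) (le_ciInf fun d => hd0min d)
  refine ⟨hpart1, ?_⟩
  set N : ℝ := ‖d0‖ ^ 2 with hN
  have hNnn : 0 ≤ N := sq_nonneg _
  -- key inequality for t ∈ (0,1)
  have key : ∀ t : ℝ, t ∈ Set.Ioo (0 : ℝ) 1 →
      Qmax f g B x d0 ≤ -(t * (σ * N) / 2) := by
    intro t ht
    obtain ⟨ht0, ht1⟩ := ht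
    have hbddA : BddAbove (Set.range fun j => Qj f g B x d0 j) :=
      Set.Finite.bddAbove (Set.finite_range _)
    have hQj : ∀ j, Qj f g B x (t • d0) j ≤
        t * Qmax f g B x d0 - t * (1 - t) * (σ * N) / 2 := by
      intro j
      have hinner : ⟪gradient (f j) x, t • d0⟫ = t * ⟪gradient (f j) x, d0⟫ :=
        real_inner_smul_right _ _ _
      have hmq : mquad (B j) (t • d0) = t ^ 2 * mquad (B j) d0 := by
        unfold mquad
        rw [LinearMap.map_smul, real_inner_smul_left, real_inner_smul_right]
        ring
      have hg : g j (x + t • d0) - g j x ≤ t * (g j (x + d0) - g j x) := by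
        have hc := (hgconv j).2 (Set.mem_univ x) (Set.mem_univ (x + d0))
          (by linarith : (0:ℝ) ≤ 1 - t) (le_of_lt ht0) (by ring)
        have heq : (1 - t) • x + t • (x + d0) = x + t • d0 := by
          module
        rw [heq] at hc
        simp only [smul_eq_mul] at hc
        nlinarith [hc]
      have hq : σ * N ≤ mquad (B j) d0 := hB j d0
      have hQjmax : Qj f g B x d0 j ≤ Qmax f g B x d0 := le_ciSup hbddA j
      unfold Qj
      rw [hinner, hmq]
      unfold Qj at hQjmax
      have h1 := mul_le_mul_of_nonneg_left hQjmax ht0.le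
      have h2 := mul_le_mul_of_nonneg_left hq
        (by nlinarith : (0:ℝ) ≤ t * (1 - t) / 2)
      nlinarith [h1, h2, hg]
    have hQmaxt : Qmax f g B x (t • d0) ≤
        t * Qmax f g B x d0 - t * (1 - t) * (σ * N) / 2 :=
      ciSup_le hQj
    have hchain := le_trans (hd0min (t • d0)) hQmaxt
    have h1t : 0 < 1 - t := by linarith
    nlinarith [hchain]
  -- take the limit t → 1⁻
  have hlim : Tendsto (fun t : ℝ => -(t * (σ * N) / 2)) (𝓝[<] (1:ℝ))
      (𝓝 (-(1 * (σ * N) / 2))) := by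
    apply Tendsto.mono_left _ nhdsWithin_le_nhds
    exact (Continuous.tendsto (by continuity) 1)
  have hev : ∀ᶠ t in 𝓝[<] (1:ℝ), Qmax f g B x d0 ≤ -(t * (σ * N) / 2) := by
    filter_upwards [Ioo_mem_nhdsLT_of_mem (by constructor <;> norm_num :
      (1:ℝ) ∈ Set.Ioc (0:ℝ) 1)] with t ht
    exact key t ht
  have := ge_of_tendsto hlim hev
  calc Qmax f g B x d0 ≤ -(1 * (σ * N) / 2) := this
    _ = -(σ / 2) * ‖d0‖ ^ 2 := by rw [hN]; ring

end NPQN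
end
end

section
/- Suppose σ > 0, B_j ⪰ σI for every j, let d = d(x) be the minimizer of Q(x,·) with θ(x) = Q(x,d), let τ ∈ (0,1), and let C_1,…,C_m ∈ ℝ satisfy C_j ≥ F_j(x) for every j. If x is not a critical point of F (equivalently d ≠ 0, so θ(x) < 0), then there exists ᾱ > 0 such that for all α ∈ (0, ᾱ] and all j ∈ {1,…,m}, F_j(x + α d) ≤ C_j + τ α θ(x). -/
open Filter Topology
open scoped RealInnerProductSpace BigOperators

noncomputable section

namespace NPQN

variable {n m : ℕ}

/-- Nonmonotone line search is well defined: if `x` is not critical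
(equivalently `d(x) ≠ 0`), then there is `ᾱ > 0` such that for all `α ∈ (0, ᾱ]` and all
`j`, `F_j(x + α d) ≤ C_j + τ α θ(x)`. -/
theorem nonmonotone_linesearch_well_defined
    (n m : ℕ) (hn : 1 ≤ n) (hm : 1 ≤ m)
    (f g : Fin m → EuclideanSpace ℝ (Fin n) → ℝ)
    (hfconv : ∀ j, ConvexOn ℝ Set.univ (f j))
    (hfdiff : ∀ j, ContDiff ℝ 1 (f j))
    (hgconv : ∀ j, ConvexOn ℝ Set.univ (g j))
    (hgcont : ∀ j, Continuous (g j))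
    (B : Fin m → Matrix (Fin n) (Fin n) ℝ)
    (hBsymm : ∀ j, (B j).IsSymm)
    (σ : ℝ) (hσ : 0 < σ)
    (hB : ∀ j, MatGE (B j) σ)
    (τ : ℝ) (hτ : τ ∈ Set.Ioo (0 : ℝ) 1)
    (x d0 : EuclideanSpace ℝ (Fin n))
    (hd0min : ∀ d, Qmax f g B x d0 ≤ Qmax f g B x d)
    (hd0ne : d0 ≠ 0)
    (C : Fin m → ℝ) (hC : ∀ j, f j x + g j x ≤ C j) :
    ∃ abar : ℝ, 0 < abar ∧ ∀ α ∈ Set.Ioc (0 : ℝ) abar, ∀ j,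
      f j (x + α • d0) + g j (x + α • d0) ≤ C j + τ * α * theta f g B x := by
  haveI : Nonempty (Fin m) := ⟨⟨0, hm⟩⟩
  set T := Qmax f g B x d0 with hT
  -- theta = T
  have hbdd : BddBelow (Set.range (Qmax f g B x)) := ⟨T, by rintro _ ⟨d, rfl⟩; exact hd0min d⟩
  have htheta : theta f g B x = T := le_antisymm (ciInf_le hbdd d0) (le_ciInf hd0min)
  -- Q_j at d0 is ≤ T
  have hQle : ∀ j, Qj f g B x d0 j ≤ T := fun j => le_ciSup (Set.Finite.bddAbove (Set.finite_range _)) j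
  have hd0norm : 0 < ‖d0‖ := norm_pos_iff.2 hd0ne
  -- strong convexity step: T < 0
  have key : ∀ j, Qj f g B x ((1/2 : ℝ) • d0) j ≤ (1/2) * Qj f g B x d0 j - σ/8 * ‖d0‖^2 := by
    intro j
    have hg2 : g j (x + (1/2:ℝ) • d0) ≤ (1/2) * g j x + (1/2) * g j (x + d0) := by
      have h := (hgconv j).2 (Set.mem_univ x) (Set.mem_univ (x + d0))
        (by norm_num : (0:ℝ) ≤ 1/2) (by norm_num : (0:ℝ) ≤ 1/2) (by norm_num)
      have heq : (1/2:ℝ) • x + (1/2:ℝ) • (x + d0) = x + (1/2:ℝ) • d0 := by module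
      rw [heq] at h
      simpa [smul_eq_mul] using h
    have hquad : mquad (B j) ((1/2:ℝ) • d0) = (1/4) * mquad (B j) d0 := by
      simp only [mquad, map_smul, real_inner_smul_left, real_inner_smul_right]
      ring
    have hinner : ⟪gradient (f j) x, (1/2:ℝ) • d0⟫ = (1/2) * ⟪gradient (f j) x, d0⟫ :=
      real_inner_smul_right _ _ _
    have hBj := hB j d0
    simp only [Qj, hquad, hinner]
    nlinarith [hg2, hBj]
  have hTneg : T < 0 := by
    have h1 : T ≤ Qmax f g B x ((1/2:ℝ) • d0) := hd0min _
    have h2 : Qmax f g B x ((1/2:ℝ) • d0) ≤ (1/2) * T - σ/8 * ‖d0‖^2 := by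
      refine ciSup_le fun j => (key j).trans ?_
      have := hQle j
      linarith
    nlinarith [mul_pos hσ (mul_pos hd0norm hd0norm)]
  obtain ⟨hτ0, hτ1⟩ := hτ
  set ε := (1 - τ) * (-T) with hε
  have hεpos : 0 < ε := mul_pos (by linarith) (by linarith)
  -- for each j, the eventual bound
  have hev : ∀ j, ∀ᶠ α in 𝓝[>] (0:ℝ),
      f j (x + α • d0) + g j (x + α • d0) ≤ C j + τ * α * T := by
    intro j
    have hslope : Tendsto (fun α : ℝ => (f j (x + α • d0) - f j x) / α) (𝓝[>] 0)
        (𝓝 ⟪gradient (f j) x, d0⟫) := by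
      have hdf : HasFDerivAt (f j) (fderiv ℝ (f j) x) x :=
        (((hfdiff j).differentiable one_ne_zero) x).hasFDerivAt
      have hline : HasDerivAt (fun t : ℝ => x + t • d0) d0 0 := by
        simpa using ((hasDerivAt_id (0:ℝ)).smul_const d0).const_add x
      have hdf' : HasFDerivAt (f j) (fderiv ℝ (f j) x) (x + (0:ℝ) • d0) := by simpa using hdf
      have hcomp : HasDerivAt (fun t : ℝ => f j (x + t • d0)) (fderiv ℝ (f j) x d0) 0 :=
        hdf'.comp_hasDerivAt 0 hline
      have hgrad : ⟪gradient (f j) x, d0⟫ = fderiv ℝ (f j) x d0 := by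
        simp [gradient, InnerProductSpace.toDual_symm_apply]
      rw [hgrad]
      have h := hasDerivAt_iff_tendsto_slope.1 hcomp
      have h2 := h.mono_left (nhdsWithin_mono 0 (fun a (ha : a ∈ Set.Ioi (0:ℝ)) => ne_of_gt ha))
      refine h2.congr (fun α => ?_)
      simp [slope_def_field]
    have h2 : ∀ᶠ α in 𝓝[>] (0:ℝ),
        (f j (x + α • d0) - f j x) / α < ⟪gradient (f j) x, d0⟫ + ε :=
      hslope.eventually_lt_const (lt_add_of_pos_right _ hεpos)
    have h3 : ∀ᶠ α in 𝓝[>] (0:ℝ), α < 1 :=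
      (eventually_lt_nhds one_pos).filter_mono nhdsWithin_le_nhds
    filter_upwards [h2, h3, self_mem_nhdsWithin] with α hα1 hα2 (hα3 : 0 < α)
    have hf' : f j (x + α • d0) ≤ f j x + α * (⟪gradient (f j) x, d0⟫ + ε) := by
      have := (div_lt_iff₀ hα3).mp hα1
      nlinarith
    have hg' : g j (x + α • d0) ≤ (1-α) * g j x + α * g j (x + d0) := by
      have h := (hgconv j).2 (Set.mem_univ x) (Set.mem_univ (x + d0))
        (by linarith : (0:ℝ) ≤ 1 - α) hα3.le (by ring)
      have heq : (1-α) • x + α • (x + d0) = x + α • d0 := by module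
      rw [heq] at h
      simpa [smul_eq_mul] using h
    have hQ := hQle j
    simp only [Qj] at hQ
    have h4 : α * (⟪gradient (f j) x, d0⟫ + (1/2) * mquad (B j) d0 + g j (x + d0) - g j x)
        ≤ α * T := mul_le_mul_of_nonneg_left hQ hα3.le
    have h5 : 0 ≤ α * mquad (B j) d0 :=
      mul_nonneg hα3.le ((by positivity : (0:ℝ) ≤ σ * ‖d0‖^2).trans (hB j d0))
    have hCj := hC j
    nlinarith [h4, h5, hf', hg', hCj]
  have hall : ∀ᶠ α in 𝓝[>] (0:ℝ), ∀ j,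
      f j (x + α • d0) + g j (x + α • d0) ≤ C j + τ * α * T := eventually_all.2 hev
  rw [eventually_iff, mem_nhdsGT_iff_exists_Ioo_subset] at hall
  obtain ⟨u, (hu : (0:ℝ) < u), hsub⟩ := hall
  refine ⟨u/2, by positivity, fun α hα j => ?_⟩
  rw [htheta]
  exact hsub ⟨hα.1, lt_of_le_of_lt hα.2 (by linarith)⟩ j

end NPQN
end
end

section
/- Let η ∈ [0,1) and τ ∈ (0,1). Let {x^k} ⊂ ℝⁿ, let α_k ≥ 0 and θ_k ≤ 0 be real sequences, and define q_0 = 1, q_{k+1} = η q_k + 1, C_j^0 = F_j(x^0), and C_j^{k+1} = (η q_k C_j^k + F_j(x^{k+1}))/q_{k+1} for each j ∈ {1,…,m}. Assume that for every k and every j, F_j(x^{k+1}) ≤ C_j^k + τ α_k θ_k, and that each F_j is bounded from below on ℝⁿ. Then for each j the sequence {C_j^k} is nonincreasing in k and converges to a finite limit as k → ∞. -/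
open Filter Topology
open scoped RealInnerProductSpace BigOperators

noncomputable section

namespace NPQN

variable {n m : ℕ}

/-- The averaged values `C_j^k` of the nonmonotone line search are
nonincreasing in `k` and converge to a finite limit, provided each `F_j` is bounded
from below and the nonmonotone descent condition holds. -/
theorem averaged_values_antitone_and_converge
    (n m : ℕ) (hn : 1 ≤ n) (hm : 1 ≤ m)
    (f g : Fin m → EuclideanSpace ℝ (Fin n) → ℝ)
    (hfconv : ∀ j, ConvexOn ℝ Set.univ (f j))
    (hfdiff : ∀ j, ContDiff ℝ 1 (f j))
    (hgconv : ∀ j, ConvexOn ℝ Set.univ (g j))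
    (hgcont : ∀ j, Continuous (g j))
    (η τ : ℝ) (hη : η ∈ Set.Ico (0 : ℝ) 1) (hτ : τ ∈ Set.Ioo (0 : ℝ) 1)
    (x : ℕ → EuclideanSpace ℝ (Fin n))
    (α θk : ℕ → ℝ) (hα : ∀ k, 0 ≤ α k) (hθk : ∀ k, θk k ≤ 0)
    (q : ℕ → ℝ) (C : Fin m → ℕ → ℝ)
    (hq0 : q 0 = 1) (hqrec : ∀ k, q (k + 1) = η * q k + 1)
    (hC0 : ∀ j, C j 0 = f j (x 0) + g j (x 0))
    (hCrec : ∀ j k, C j (k + 1) =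
      (η * q k * C j k + (f j (x (k + 1)) + g j (x (k + 1)))) / q (k + 1))
    (hdesc : ∀ k j, f j (x (k + 1)) + g j (x (k + 1)) ≤ C j k + τ * α k * θk k)
    (hbdd : ∀ j, BddBelow (Set.range (fun y => f j y + g j y))) :
    ∀ j, Antitone (C j) ∧ ∃ Clim : ℝ, Tendsto (fun k => C j k) atTop (𝓝 Clim) := by
  intro j
  obtain ⟨hη0, hη1⟩ := hη
  -- q positivity
  have hq1 : ∀ k, (1:ℝ) ≤ q k := by
    intro k
    induction k with
    | zero => rw [hq0]
    | succ k ih =>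
      rw [hqrec]
      nlinarith
  have hqpos : ∀ k, (0:ℝ) < q k := fun k => lt_of_lt_of_le one_pos (hq1 k)
  -- F ≤ C
  have hF : ∀ k, f j (x (k+1)) + g j (x (k+1)) ≤ C j k := by
    intro k
    have h1 : τ * α k * θk k ≤ 0 :=
      mul_nonpos_of_nonneg_of_nonpos (mul_nonneg hτ.1.le (hα k)) (hθk k)
    have := hdesc k j
    linarith
  -- antitone
  have hstep : ∀ k, C j (k+1) ≤ C j k := by
    intro k
    rw [hCrec j k, div_le_iff₀ (hqpos (k+1)), hqrec]
    have := hF k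
    have hqk := hqpos k
    nlinarith
  have hanti : Antitone (C j) := antitone_nat_of_succ_le hstep
  refine ⟨hanti, ?_⟩
  -- lower bound
  obtain ⟨b, hb⟩ := hbdd j
  have hbF : ∀ y, b ≤ f j y + g j y := fun y => hb ⟨y, rfl⟩
  have hlb : ∀ k, b ≤ C j k := by
    intro k
    induction k with
    | zero => rw [hC0]; exact hbF _
    | succ k ih =>
      rw [hCrec j k, le_div_iff₀ (hqpos (k+1)), hqrec]
      have := hbF (x (k+1))
      have hqk := hqpos k
      nlinarith [mul_le_mul_of_nonneg_left ih (mul_nonneg hη0 hqk.le)]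
  exact ⟨_, tendsto_atTop_ciInf hanti ⟨b, fun v ⟨k, hk⟩ => hk ▸ hlb k⟩⟩

end NPQN
end
end

section
/- Let η ∈ (0,1) and τ ∈ (0,1). Let {x^k} ⊂ ℝⁿ, let α_k ≥ 0 and θ_k ≤ 0 be real sequences, and define q_0 = 1, q_{k+1} = η q_k + 1, C_j^0 = F_j(x^0), and C_j^{k+1} = (η q_k C_j^k + F_j(x^{k+1}))/q_{k+1} for each j ∈ {1,…,m}. Assume that for every k and every j, F_j(x^{k+1}) ≤ C_j^k + τ α_k θ_k, and that each F_j is bounded from below on ℝⁿ. Then lim_{k→∞} α_k |θ_k| = 0. -/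
open Filter Topology
open scoped RealInnerProductSpace BigOperators

noncomputable section

namespace NPQN

variable {n m : ℕ}

/-- Under the nonmonotone descent condition with `η ∈ (0,1)` and each
`F_j` bounded from below, `lim_{k→∞} α_k |θ_k| = 0`. -/
theorem alpha_theta_tendsto_zero
    (n m : ℕ) (hn : 1 ≤ n) (hm : 1 ≤ m)
    (f g : Fin m → EuclideanSpace ℝ (Fin n) → ℝ)
    (hfconv : ∀ j, ConvexOn ℝ Set.univ (f j))
    (hfdiff : ∀ j, ContDiff ℝ 1 (f j))
    (hgconv : ∀ j, ConvexOn ℝ Set.univ (g j))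
    (hgcont : ∀ j, Continuous (g j))
    (η τ : ℝ) (hη : η ∈ Set.Ioo (0 : ℝ) 1) (hτ : τ ∈ Set.Ioo (0 : ℝ) 1)
    (x : ℕ → EuclideanSpace ℝ (Fin n))
    (α θk : ℕ → ℝ) (hα : ∀ k, 0 ≤ α k) (hθk : ∀ k, θk k ≤ 0)
    (q : ℕ → ℝ) (C : Fin m → ℕ → ℝ)
    (hq0 : q 0 = 1) (hqrec : ∀ k, q (k + 1) = η * q k + 1)
    (hC0 : ∀ j, C j 0 = f j (x 0) + g j (x 0))
    (hCrec : ∀ j k, C j (k + 1) =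
      (η * q k * C j k + (f j (x (k + 1)) + g j (x (k + 1)))) / q (k + 1))
    (hdesc : ∀ k j, f j (x (k + 1)) + g j (x (k + 1)) ≤ C j k + τ * α k * θk k)
    (hbdd : ∀ j, BddBelow (Set.range (fun y => f j y + g j y))) :
    Tendsto (fun k => α k * |θk k|) atTop (𝓝 0) := by
  obtain ⟨hη0, hη1⟩ := hη
  obtain ⟨hτ0, hτ1⟩ := hτ
  set j : Fin m := ⟨0, hm⟩
  obtain ⟨L, hL⟩ := hbdd j
  have hLle : ∀ z, L ≤ f j z + g j z := fun z => hL ⟨z, rfl⟩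
  -- q bounds
  have hq1 : ∀ k, 1 ≤ q k := by
    intro k
    induction k with
    | zero => rw [hq0]
    | succ k ih =>
      rw [hqrec]
      nlinarith
  have hqpos : ∀ k, 0 < q k := fun k => lt_of_lt_of_le one_pos (hq1 k)
  have hqup : ∀ k, q k ≤ 1 / (1 - η) := by
    intro k
    induction k with
    | zero =>
      rw [hq0, le_div_iff₀ (by linarith)]; linarith
    | succ k ih =>
      rw [hqrec, ← sub_nonneg]
      have : 1 / (1 - η) - (η * q k + 1) = (1 / (1 - η) - q k) * η := by
        have hne : (1 : ℝ) - η ≠ 0 := by linarith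
        field_simp
        ring
      rw [this]
      exact mul_nonneg (by linarith) (le_of_lt hη0)
  -- C bounded below by L
  have hCL : ∀ k, L ≤ C j k := by
    intro k
    induction k with
    | zero => rw [hC0]; exact hLle _
    | succ k ih =>
      rw [hCrec, le_div_iff₀ (hqpos (k + 1)), hqrec]
      have h1 : η * q k * L ≤ η * q k * C j k :=
        mul_le_mul_of_nonneg_left ih (mul_nonneg hη0.le (hqpos k).le)
      have h2 := hLle (x (k + 1))
      nlinarith
  -- key decrease
  set b : ℕ → ℝ := fun k => τ * α k * |θk k| / q (k + 1) with hb
  have hbnn : ∀ k, 0 ≤ b k := fun k =>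
    div_nonneg (mul_nonneg (mul_nonneg hτ0.le (hα k)) (abs_nonneg _)) (hqpos (k + 1)).le
  have hkey : ∀ k, C j (k + 1) + b k ≤ C j k := by
    intro k
    have habs : |θk k| = -θk k := abs_of_nonpos (hθk k)
    have hbk : b k = τ * α k * |θk k| / q (k + 1) := rfl
    rw [hCrec, hbk, habs, ← add_div, div_le_iff₀ (hqpos (k + 1))]
    have h1 := hdesc k j
    have hq := hqrec k
    have h2 : τ * α k * -θk k = -(τ * α k * θk k) := by ring
    have h3 : C j k * q (k + 1) = η * q k * C j k + C j k := by rw [hq]; ring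
    linarith
  -- partial sums bounded
  have hpart : ∀ N, C j N + ∑ i ∈ Finset.range N, b i ≤ C j 0 := by
    intro N
    induction N with
    | zero => simp
    | succ N ih =>
      rw [Finset.sum_range_succ]
      have := hkey N
      linarith
  have hsumbdd : ∀ N, ∑ i ∈ Finset.range N, b i ≤ C j 0 - L := by
    intro N
    have := hpart N
    have := hCL N
    linarith
  have hsum : Summable b := summable_of_sum_range_le hbnn hsumbdd
  have hb0 : Tendsto b atTop (𝓝 0) := hsum.tendsto_atTop_zero
  -- squeeze
  have hbound : ∀ k, α k * |θk k| ≤ b k * (1 / ((1 - η) * τ)) := by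
    intro k
    have hτne : τ ≠ 0 := ne_of_gt hτ0
    have hqne : q (k + 1) ≠ 0 := ne_of_gt (hqpos (k + 1))
    have h1η : (0 : ℝ) < 1 - η := by linarith
    have heq : b k * (1 / ((1 - η) * τ)) = α k * |θk k| / (q (k + 1) * (1 - η)) := by
      rw [hb]
      field_simp
    rw [heq, le_div_iff₀ (mul_pos (hqpos (k + 1)) h1η)]
    have hq1 : q (k + 1) * (1 - η) ≤ 1 := by
      have := hqup (k + 1)
      rw [← sub_nonneg]
      have : 1 - q (k + 1) * (1 - η) = (1 / (1 - η) - q (k + 1)) * (1 - η) := by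
        field_simp
      rw [this]
      exact mul_nonneg (by linarith [hqup (k + 1)]) h1η.le
    nlinarith [mul_nonneg (hα k) (abs_nonneg (θk k))]
  have hlim : Tendsto (fun k => b k * (1 / ((1 - η) * τ))) atTop (𝓝 0) := by
    have := hb0.mul_const (1 / ((1 - η) * τ))
    simpa using this
  exact squeeze_zero (fun k => mul_nonneg (hα k) (abs_nonneg _)) hbound hlim

end NPQN
end
end

section
/- Let λ ∈ Δ_m, let each f_j be convex and twice continuously differentiable, each g_j convex and continuous, and each B_j symmetric positive definite. Write f_λ = Σ_j λ_j f_j, g_λ = Σ_j λ_j g_j, F_λ = f_λ + g_λ, B_λ = Σ_j λ_j B_j, and ‖v‖²_{B_λ} = ⟨v, B_λ v⟩. Let x, d ∈ ℝⁿ, set x⁺ = x + d, and suppose −∇f_λ(x) − B_λ d ∈ ∂g_λ(x⁺). Then for every y ∈ ℝⁿ: F_λ(x⁺) − F_λ(y) ≤ (1/2)‖x − y‖²_{B_λ} − (1/2)‖x⁺ − x‖²_{B_λ} − (1/2)‖x⁺ − y‖²_{B_λ} + ∫₀¹∫₀¹ t ⟨x⁺ − x, ∇²f_λ(x + st(x⁺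 − x))(x⁺ − x)⟩ ds dt − ∫₀¹∫₀¹ t ⟨y − x, ∇²f_λ(x + st(y − x))(y − x)⟩ ds dt. -/
open Filter Topology
open scoped RealInnerProductSpace BigOperators

noncomputable section

namespace NPQN

variable {n m : ℕ}

/- ### Auxiliary lemmas -/

lemma grad_contDiff' (fl : EuclideanSpace ℝ (Fin n) → ℝ) (h : ContDiff ℝ 2 fl) :
    ContDiff ℝ 1 (fun z : EuclideanSpace ℝ (Fin n) => gradient fl z) := by
  have h1 : ContDiff ℝ 1 (fderiv ℝ fl) := h.fderiv_right (by norm_num)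
  exact ((InnerProductSpace.toDual ℝ (EuclideanSpace ℝ (Fin n))).symm.contDiff).comp h1

lemma hess_cont' (fl : EuclideanSpace ℝ (Fin n) → ℝ) (h : ContDiff ℝ 2 fl) :
    Continuous (fun z : EuclideanSpace ℝ (Fin n) => hess fl z) := by
  have := (grad_contDiff' fl h).fderiv_right (m := 0) (by norm_num)
  exact this.continuous

lemma hasFDerivAt_grad' (fl : EuclideanSpace ℝ (Fin n) → ℝ) (h : ContDiff ℝ 2 fl)
    (z : EuclideanSpace ℝ (Fin n)) :
    HasFDerivAt (fun y => gradient fl y) (hess fl z) z :=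
  ((grad_contDiff' fl h).differentiable one_ne_zero).differentiableAt.hasFDerivAt

lemma inner_grad' (fl : EuclideanSpace ℝ (Fin n) → ℝ)
    (z v : EuclideanSpace ℝ (Fin n)) :
    ⟪gradient fl z, v⟫ = fderiv ℝ fl z v := by
  simp [gradient]

/-- Second-order Taylor formula with double-integral remainder. -/
lemma taylor_double (fl : EuclideanSpace ℝ (Fin n) → ℝ) (h : ContDiff ℝ 2 fl)
    (x v : EuclideanSpace ℝ (Fin n)) :
    fl (x + v) = fl x + ⟪gradient fl x, v⟫ +
      ∫ t in (0:ℝ)..1, ∫ s in (0:ℝ)..1, t * ⟪v, hess fl (x + (s * t) • v) v⟫ := by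
  set G : EuclideanSpace ℝ (Fin n) → EuclideanSpace ℝ (Fin n) := fun z => gradient fl z with hG
  have key1 : ∀ t : ℝ, (∫ s in (0:ℝ)..1, t * ⟪v, hess fl (x + (s * t) • v) v⟫)
      = ⟪v, G (x + t • v)⟫ - ⟪v, G x⟫ := by
    intro t
    have hc : ∀ s : ℝ, HasDerivAt (fun s : ℝ => x + (s * t) • v) (t • v) s := by
      intro s
      have h1 : HasDerivAt (fun s : ℝ => (s * t) • v) (t • v) s := by
        simpa using ((hasDerivAt_id s).mul_const t).smul_const v
      simpa using h1.const_add x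
    have hder : ∀ s : ℝ, HasDerivAt (fun s : ℝ => ⟪v, G (x + (s * t) • v)⟫)
        (t * ⟪v, hess fl (x + (s * t) • v) v⟫) s := by
      intro s
      have h2 : HasDerivAt (fun s : ℝ => G (x + (s * t) • v))
          (hess fl (x + (s * t) • v) (t • v)) s :=
        (hasFDerivAt_grad' fl h _).comp_hasDerivAt s (hc s)
      have h3 := ((innerSL ℝ v).hasFDerivAt.comp_hasDerivAt s h2)
      simpa [map_smul, real_inner_smul_right, mul_comm, Function.comp_def] using h3
    have hcont : Continuous (fun s : ℝ => t * ⟪v, hess fl (x + (s * t) • v) v⟫) := by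
      have hcurve : Continuous (fun s : ℝ => x + (s * t) • v) := by continuity
      exact continuous_const.mul
        (continuous_const.inner (((hess_cont' fl h).comp hcurve).clm_apply continuous_const))
    have := intervalIntegral.integral_eq_sub_of_hasDerivAt
      (fun s _ => hder s) (hcont.intervalIntegrable 0 1)
    simpa using this
  have hder2 : ∀ t : ℝ, HasDerivAt (fun t : ℝ => fl (x + t • v)) ⟪v, G (x + t • v)⟫ t := by
    intro t
    have hc : HasDerivAt (fun t : ℝ => x + t • v) v t := by
      simpa using ((hasDerivAt_id t).smul_const v).const_add x
    have h2 : HasDerivAt (fun t : ℝ => fl (x + t • v)) (fderiv ℝ fl (x + t • v) v) t :=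
      ((h.differentiable (by norm_num)).differentiableAt.hasFDerivAt).comp_hasDerivAt t hc
    have he : fderiv ℝ fl (x + t • v) v = ⟪v, G (x + t • v)⟫ := by
      rw [← inner_grad' fl, real_inner_comm]
    rwa [he] at h2
  have hGc : Continuous G := (grad_contDiff' fl h).continuous
  have hcont2 : Continuous (fun t : ℝ => ⟪v, G (x + t • v)⟫) :=
    continuous_const.inner (hGc.comp (by continuity))
  have ftc2 : fl (x + v) - fl x = ∫ t in (0:ℝ)..1, ⟪v, G (x + t • v)⟫ := by
    have := intervalIntegral.integral_eq_sub_of_hasDerivAt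
      (fun t _ => hder2 t) (hcont2.intervalIntegrable 0 1)
    rw [this]
    simp only [one_smul, zero_smul, add_zero]
  have hswap : (∫ t in (0:ℝ)..1, ∫ s in (0:ℝ)..1, t * ⟪v, hess fl (x + (s * t) • v) v⟫)
      = ∫ t in (0:ℝ)..1, (⟪v, G (x + t • v)⟫ - ⟪v, G x⟫) := by
    apply intervalIntegral.integral_congr
    intro t _
    exact key1 t
  rw [hswap, intervalIntegral.integral_sub (hcont2.intervalIntegrable 0 1)
    (intervalIntegrable_const), ← ftc2, intervalIntegral.integral_const]
  simp only [sub_zero, one_smul, real_inner_comm v]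
  ring

lemma quad_identity' (L : EuclideanSpace ℝ (Fin n) →ₗ[ℝ] EuclideanSpace ℝ (Fin n))
    (hs : L.IsSymmetric) (a b : EuclideanSpace ℝ (Fin n)) :
    ⟪b - a, L (b - a)⟫ - ⟪a, L a⟫ - ⟪b, L b⟫ = -2 * ⟪a, L b⟫ := by
  have h1 : ⟪b, L a⟫ = ⟪a, L b⟫ := by rw [real_inner_comm, hs]
  simp only [map_sub, inner_sub_left, inner_sub_right]
  rw [h1]; ring

/-- The fundamental inequality. If
`−∇f_λ(x) − B_λ d ∈ ∂g_λ(x⁺)` where `x⁺ = x + d`, then for every `y`,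
`F_λ(x⁺) − F_λ(y) ≤ (1/2)‖x−y‖²_{B_λ} − (1/2)‖x⁺−x‖²_{B_λ} − (1/2)‖x⁺−y‖²_{B_λ}
 + ∫₀¹∫₀¹ t⟨x⁺−x, ∇²f_λ(x+st(x⁺−x))(x⁺−x)⟩ ds dt
 − ∫₀¹∫₀¹ t⟨y−x, ∇²f_λ(x+st(y−x))(y−x)⟩ ds dt`. -/
theorem fundamental_inequality
    (n m : ℕ) (hn : 1 ≤ n) (hm : 1 ≤ m)
    (f g : Fin m → EuclideanSpace ℝ (Fin n) → ℝ)
    (hfconv : ∀ j, ConvexOn ℝ Set.univ (f j))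
    (hf2 : ∀ j, ContDiff ℝ 2 (f j))
    (hgconv : ∀ j, ConvexOn ℝ Set.univ (g j))
    (hgcont : ∀ j, Continuous (g j))
    (B : Fin m → Matrix (Fin n) (Fin n) ℝ)
    (hBsymm : ∀ j, (B j).IsSymm)
    (hBpd : ∀ j, ∀ v : EuclideanSpace ℝ (Fin n), v ≠ 0 → 0 < mquad (B j) v)
    (lam : Fin m → ℝ) (hlam0 : ∀ j, 0 ≤ lam j) (hlam1 : ∑ j, lam j = 1)
    (fl gl : EuclideanSpace ℝ (Fin n) → ℝ)
    (hfl : fl = fun z => ∑ j, lam j * f j z)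
    (hgl : gl = fun z => ∑ j, lam j * g j z)
    (Bl : Matrix (Fin n) (Fin n) ℝ) (hBl : Bl = ∑ j, lam j • B j)
    (x d xp : EuclideanSpace ℝ (Fin n)) (hxp : xp = x + d)
    (hsubgrad : IsSubgradAt gl xp (-(gradient fl x) - Matrix.toEuclideanLin Bl d)) :
    ∀ y : EuclideanSpace ℝ (Fin n),
      (fl xp + gl xp) - (fl y + gl y) ≤
        1 / 2 * mquad Bl (x - y) - 1 / 2 * mquad Bl (xp - x) - 1 / 2 * mquad Bl (xp - y)
        + (∫ t in (0:ℝ)..1, ∫ s in (0:ℝ)..1,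
            t * ⟪xp - x, hess fl (x + (s * t) • (xp - x)) (xp - x)⟫)
        - (∫ t in (0:ℝ)..1, ∫ s in (0:ℝ)..1,
            t * ⟪y - x, hess fl (x + (s * t) • (y - x)) (y - x)⟫) := by
  intro y
  -- smoothness of fl
  have hflC : ContDiff ℝ 2 fl := by
    rw [hfl]
    exact ContDiff.sum fun j _ => contDiff_const.mul (hf2 j)
  -- symmetry of Bl
  have hBlsymm : Bl.IsSymm := by
    rw [hBl]
    unfold Matrix.IsSymm
    rw [Matrix.transpose_sum]
    exact Finset.sum_congr rfl fun j _ => by rw [Matrix.transpose_smul, hBsymm j]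
  have hherm : Bl.IsHermitian := by
    rw [Matrix.IsHermitian, Matrix.conjTranspose_eq_transpose_of_trivial]
    exact hBlsymm
  have hsym : (Matrix.toEuclideanLin Bl).IsSymmetric :=
    Matrix.isHermitian_iff_isSymmetric.1 hherm
  set L := Matrix.toEuclideanLin Bl with hL
  set gr := gradient fl x with hgr
  -- Taylor at xp and y
  have e1 : x + (xp - x) = xp := by abel
  have e2 : x + (y - x) = y := by abel
  have T1 := taylor_double fl hflC x (xp - x)
  have T2 := taylor_double fl hflC x (y - x)
  rw [e1] at T1
  rw [e2] at T2
  -- subgradient inequality at y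
  have A3 := hsubgrad y
  -- expand the subgradient inner product
  have A4 : ⟪-(gradient fl x) - L d, y - xp⟫
      = -⟪gr, y - xp⟫ + ⟪d, L (xp - y)⟫ := by
    have h1 : ⟪L d, y - xp⟫ = -⟪d, L (xp - y)⟫ := by
      rw [hsym d]
      rw [← inner_neg_right, ← map_neg]
      congr 1
      abel
    rw [inner_sub_left, inner_neg_left, h1, hgr]
    ring
  -- quadratic identity
  have A5 : 1 / 2 * mquad Bl (x - y) - 1 / 2 * mquad Bl (xp - x) - 1 / 2 * mquad Bl (xp - y)
      = -⟪d, L (xp - y)⟫ := by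
    have hxy : x - y = (xp - y) - (xp - x) := by abel
    have hd : xp - x = d := by rw [hxp]; abel
    unfold mquad
    rw [hxy, ← hL, hd]
    linarith [quad_identity' L hsym d (xp - y)]
  -- gradient inner products collapse
  have A6 : ⟪gr, xp - x⟫ - ⟪gr, y - x⟫ + ⟪gr, y - xp⟫ = 0 := by
    rw [← inner_sub_right, ← inner_add_right]
    have hz : (xp - x) - (y - x) + (y - xp) = 0 := by abel
    rw [hz, inner_zero_right]
  rw [A4] at A3
  linarith [T1, T2, A3, A5, A6]

end NPQN
end
end

section
/- Let τ ∈ (0,1), σ > 0 and 0 < ε ≤ σ(1−τ)/3. Let x, x* ∈ ℝⁿ, let each f_j be twice continuously differentiable, let B_1,…,B_m be symmetric matrices with B_j ⪰ σI, let d be a minimizer of Q(x,·) with θ = Q(x,d), and assume θ ≤ −(σ/2)‖d‖². Assume for each j ∈ {1,…,m}: (i) f_j(x+d) ≤ f_j(x) + ⟨∇f_j(x), d⟩ + (1/2)⟨d, ∇²f_j(x) d⟩ + (ε/2)‖d‖²; (ii) ⟨d, (∇²f_j(x) − ∇²f_j(x*)) d⟩ ≤ ε‖d‖²; (iii) ⟨d,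 (∇²f_j(x*) − B_j) d⟩ ≤ ε‖d‖² (Dennis–Moré criterion); and (iv) F_j(x) ≤ C_j. Then F_j(x + d) ≤ C_j + τθ for every j, i.e., the unit step length satisfies the nonmonotone line-search condition. -/
open Filter Topology
open scoped RealInnerProductSpace BigOperators

noncomputable section

namespace NPQN

variable {n m : ℕ}

/-- Acceptance of the unit step length: under the Dennis–Moré criterion
and the local Hessian estimates (i)–(iv), the unit step satisfies the nonmonotone
line-search condition `F_j(x + d) ≤ C_j + τθ` for every `j`. -/
theorem unit_step_accepted
    (n m : ℕ) (hn : 1 ≤ n) (hm : 1 ≤ m)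
    (f g : Fin m → EuclideanSpace ℝ (Fin n) → ℝ)
    (hf2 : ∀ j, ContDiff ℝ 2 (f j))
    (hgconv : ∀ j, ConvexOn ℝ Set.univ (g j))
    (hgcont : ∀ j, Continuous (g j))
    (τ σ ε : ℝ) (hτ : τ ∈ Set.Ioo (0 : ℝ) 1) (hσ : 0 < σ)
    (hε : 0 < ε) (hεle : ε ≤ σ * (1 - τ) / 3)
    (x xstar : EuclideanSpace ℝ (Fin n))
    (B : Fin m → Matrix (Fin n) (Fin n) ℝ)
    (hBsymm : ∀ j, (B j).IsSymm)
    (hB : ∀ j, MatGE (B j) σ)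
    (d : EuclideanSpace ℝ (Fin n))
    (hdmin : ∀ e, Qmax f g B x d ≤ Qmax f g B x e)
    (θ : ℝ) (hθ : θ = Qmax f g B x d)
    (hθle : θ ≤ -(σ / 2) * ‖d‖ ^ 2)
    (hi : ∀ j, f j (x + d) ≤ f j x + ⟪gradient (f j) x, d⟫
      + 1 / 2 * ⟪d, hess (f j) x d⟫ + ε / 2 * ‖d‖ ^ 2)
    (hii : ∀ j, ⟪d, hess (f j) x d - hess (f j) xstar d⟫ ≤ ε * ‖d‖ ^ 2)
    (hiii : ∀ j, ⟪d, hess (f j) xstar d - Matrix.toEuclideanLin (B j) d⟫ ≤ ε * ‖d‖ ^ 2)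
    (C : Fin m → ℝ) (hiv : ∀ j, f j x + g j x ≤ C j) :
    ∀ j, f j (x + d) + g j (x + d) ≤ C j + τ * θ := by
  intro j
  have hQ : Qj f g B x d j ≤ θ := by
    rw [hθ]
    exact le_ciSup (Set.Finite.bddAbove (Set.finite_range _)) j
  have h1 := hi j
  have h2 := hii j
  have h3 := hiii j
  rw [inner_sub_right] at h2 h3
  have hd2 : (0:ℝ) ≤ ‖d‖ ^ 2 := sq_nonneg _
  have hmq : ⟪d, hess (f j) x d⟫ ≤ mquad (B j) d + 2 * ε * ‖d‖ ^ 2 := by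
    unfold mquad; linarith
  have hθd : σ / 2 * ‖d‖ ^ 2 ≤ -θ := by linarith
  have hε2 : (3 / 2) * ε * ‖d‖ ^ 2 ≤ (1 - τ) * (-θ) := by
    have ha : (3 / 2) * ε * ‖d‖ ^ 2 ≤ σ * (1 - τ) / 2 * ‖d‖ ^ 2 := by nlinarith
    have hb : σ * (1 - τ) / 2 * ‖d‖ ^ 2 ≤ (1 - τ) * (-θ) := by nlinarith [hτ.2]
    linarith
  have hQj : Qj f g B x d j
      = ⟪gradient (f j) x, d⟫ + (1 / 2) * mquad (B j) d + g j (x + d) - g j x := rfl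
  have hC := hiv j
  nlinarith [hQ, hQj]

end NPQN
end
end

section
/- Let σ > 0 and ε > 0 with 3ε < σ. Let x, x⁺, x* ∈ ℝⁿ with x ≠ x*, and suppose σ‖x⁺ − x*‖² ≤ 3ε‖x⁺ − x‖² + 3ε‖x − x*‖². Set t = ‖x⁺ − x‖/‖x − x*‖. Then (σ − 3ε)t² − 2σt + (σ − 3ε) ≤ 0; consequently (σ − √(6σε − 9ε²))/(σ − 3ε) ≤ t ≤ (σ + √(6σε − 9ε²))/(σ − 3ε), and ‖x⁺ − x*‖ ≤ √(3ε(1 + t²)/σ) · ‖x − x*‖. -/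
open Filter Topology

noncomputable section

set_option maxHeartbeats 1000000 in
/-- If `σ‖x⁺ − x*‖² ≤ 3ε‖x⁺ − x‖² + 3ε‖x − x*‖²` with `0 < 3ε < σ` and
`x ≠ x*`, then with `t = ‖x⁺ − x‖/‖x − x*‖` one has
`(σ − 3ε)t² − 2σt + (σ − 3ε) ≤ 0`, hence
`(σ − √(6σε − 9ε²))/(σ − 3ε) ≤ t ≤ (σ + √(6σε − 9ε²))/(σ − 3ε)`, and
`‖x⁺ − x*‖ ≤ √(3ε(1 + t²)/σ)·‖x − x*‖`. -/
theorem quadratic_ratio_bounds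
    (n : ℕ) (hn : 1 ≤ n)
    (σ ε : ℝ) (hσ : 0 < σ) (hε : 0 < ε) (h3ε : 3 * ε < σ)
    (x xp xstar : EuclideanSpace ℝ (Fin n)) (hxne : x ≠ xstar)
    (hineq : σ * ‖xp - xstar‖ ^ 2 ≤ 3 * ε * ‖xp - x‖ ^ 2 + 3 * ε * ‖x - xstar‖ ^ 2)
    (t : ℝ) (ht : t = ‖xp - x‖ / ‖x - xstar‖) :
    (σ - 3 * ε) * t ^ 2 - 2 * σ * t + (σ - 3 * ε) ≤ 0 ∧
    (σ - Real.sqrt (6 * σ * ε - 9 * ε ^ 2)) / (σ - 3 * ε) ≤ t ∧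
    t ≤ (σ + Real.sqrt (6 * σ * ε - 9 * ε ^ 2)) / (σ - 3 * ε) ∧
    ‖xp - xstar‖ ≤ Real.sqrt (3 * ε * (1 + t ^ 2) / σ) * ‖x - xstar‖ := by
  set a := ‖xp - x‖ with ha
  set b := ‖x - xstar‖ with hb
  set c := ‖xp - xstar‖ with hc
  have hbpos : 0 < b := by
    rw [hb]; exact norm_pos_iff.mpr (sub_ne_zero.mpr hxne)
  have hanneg : 0 ≤ a := norm_nonneg _
  have hcnneg : 0 ≤ c := norm_nonneg _
  have hta : a = t * b := by
    rw [ht]; field_simp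
  -- triangle inequalities
  have h1 : b ≤ a + c := by
    have h := norm_sub_le_norm_sub_add_norm_sub x xp xstar
    rw [norm_sub_rev x xp] at h
    exact h
  have h2 : a ≤ c + b := by
    have h := norm_sub_le_norm_sub_add_norm_sub xp xstar x
    rw [norm_sub_rev xstar x] at h
    exact h
  have hsq : (b - a) ^ 2 ≤ c ^ 2 := by nlinarith
  have key : (σ - 3 * ε) * t ^ 2 - 2 * σ * t + (σ - 3 * ε) ≤ 0 := by
    have h3 : σ * (b - a) ^ 2 ≤ 3 * ε * a ^ 2 + 3 * ε * b ^ 2 := by nlinarith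
    rw [hta] at h3
    have hb2 : 0 < b ^ 2 := by positivity
    nlinarith [sq_nonneg b]
  refine ⟨key, ?_, ?_, ?_⟩
  · -- lower bound
    have hDnn : 0 ≤ 6 * σ * ε - 9 * ε ^ 2 := by nlinarith
    have hD2 : Real.sqrt (6 * σ * ε - 9 * ε ^ 2) ^ 2 = 6 * σ * ε - 9 * ε ^ 2 :=
      Real.sq_sqrt hDnn
    have hDnneg : 0 ≤ Real.sqrt (6 * σ * ε - 9 * ε ^ 2) := Real.sqrt_nonneg _
    rw [div_le_iff₀ (by linarith : (0:ℝ) < σ - 3 * ε)]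
    nlinarith [sq_nonneg ((σ - 3 * ε) * t - σ + Real.sqrt (6 * σ * ε - 9 * ε ^ 2))]
  · have hDnn : 0 ≤ 6 * σ * ε - 9 * ε ^ 2 := by nlinarith
    have hD2 : Real.sqrt (6 * σ * ε - 9 * ε ^ 2) ^ 2 = 6 * σ * ε - 9 * ε ^ 2 :=
      Real.sq_sqrt hDnn
    have hDnneg : 0 ≤ Real.sqrt (6 * σ * ε - 9 * ε ^ 2) := Real.sqrt_nonneg _
    rw [le_div_iff₀ (by linarith : (0:ℝ) < σ - 3 * ε)]
    nlinarith [sq_nonneg ((σ - 3 * ε) * t - σ - Real.sqrt (6 * σ * ε - 9 * ε ^ 2))]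
  · have hc2 : c ^ 2 ≤ 3 * ε * (1 + t ^ 2) / σ * b ^ 2 := by
      have h4 : σ * c ^ 2 ≤ 3 * ε * (t * b) ^ 2 + 3 * ε * b ^ 2 := by
        rw [← hta]; exact hineq
      rw [div_mul_eq_mul_div, le_div_iff₀ hσ]
      nlinarith [h4]
    calc c = Real.sqrt (c ^ 2) := (Real.sqrt_sq hcnneg).symm
      _ ≤ Real.sqrt (3 * ε * (1 + t ^ 2) / σ * b ^ 2) := Real.sqrt_le_sqrt hc2
      _ = Real.sqrt (3 * ε * (1 + t ^ 2) / σ) * b := by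
          rw [Real.sqrt_mul (by positivity), Real.sqrt_sq hbpos.le]


end
end

section
/- Let σ > 0, let x* ∈ ℝⁿ, and let {x^k} ⊂ ℝⁿ be a sequence with x^k ≠ x* for all k. Suppose there is a sequence ε_k → 0 with 0 < 3ε_k < σ such that σ‖x^{k+1} − x*‖² ≤ 3ε_k‖x^{k+1} − x^k‖² + 3ε_k‖x^k − x*‖² for all k. Then lim_{k→∞} ‖x^{k+1} − x*‖/‖x^k − x*‖ = 0; in particular {x^k} converges superlinearly to x*. -/
open Filter Topology

noncomputable section

/-- If `σ‖x^{k+1} − x*‖² ≤ 3ε_k‖x^{k+1} − x^k‖² + 3ε_k‖x^k − x*‖²` with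
`0 < 3ε_k < σ`, `ε_k → 0`, and `x^k ≠ x*` for all `k`, then
`lim_{k→∞} ‖x^{k+1} − x*‖/‖x^k − x*‖ = 0`; in particular `{x^k}` converges
superlinearly to `x*`. -/
theorem superlinear_convergence
    (n : ℕ) (hn : 1 ≤ n)
    (σ : ℝ) (hσ : 0 < σ)
    (xstar : EuclideanSpace ℝ (Fin n)) (x : ℕ → EuclideanSpace ℝ (Fin n))
    (hne : ∀ k, x k ≠ xstar)
    (ε : ℕ → ℝ) (hεpos : ∀ k, 0 < ε k) (hεlt : ∀ k, 3 * ε k < σ)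
    (hεto : Tendsto ε atTop (𝓝 0))
    (hineq : ∀ k, σ * ‖x (k + 1) - xstar‖ ^ 2 ≤
      3 * ε k * ‖x (k + 1) - x k‖ ^ 2 + 3 * ε k * ‖x k - xstar‖ ^ 2) :
    Tendsto (fun k => ‖x (k + 1) - xstar‖ / ‖x k - xstar‖) atTop (𝓝 0) ∧
    Tendsto x atTop (𝓝 xstar) := by
  have hb : ∀ k, 0 < ‖x k - xstar‖ := fun k =>
    norm_pos_iff.mpr (sub_ne_zero.mpr (hne k))
  have hev : ∀ᶠ k in atTop, ε k < σ / 12 :=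
    hεto.eventually_lt_const (by positivity)
  have key : ∀ k, ε k < σ / 12 →
      (‖x (k + 1) - xstar‖ / ‖x k - xstar‖) ^ 2 ≤ 18 * ε k / σ := by
    intro k hk
    have hab : ‖x (k + 1) - x k‖ ≤ ‖x (k + 1) - xstar‖ + ‖x k - xstar‖ := by
      have := norm_sub_le_norm_sub_add_norm_sub (x (k + 1)) xstar (x k)
      rwa [norm_sub_rev xstar (x k)] at this
    have hc2 : ‖x (k + 1) - x k‖ ^ 2 ≤
        2 * ‖x (k + 1) - xstar‖ ^ 2 + 2 * ‖x k - xstar‖ ^ 2 := by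
      nlinarith [norm_nonneg (x (k + 1) - x k), norm_nonneg (x (k + 1) - xstar),
        norm_nonneg (x k - xstar), sq_nonneg (‖x (k + 1) - xstar‖ - ‖x k - xstar‖)]
    rw [div_pow, div_le_div_iff₀ (pow_pos (hb k) 2) hσ]
    nlinarith [hineq k, hεpos k, sq_nonneg ‖x (k + 1) - xstar‖,
      sq_nonneg ‖x k - xstar‖,
      mul_nonneg (by linarith [hεpos k] : (0:ℝ) ≤ σ / 2 - 6 * ε k)
        (sq_nonneg ‖x (k + 1) - xstar‖),
      mul_nonneg (le_of_lt (hεpos k)) (sq_nonneg ‖x k - xstar‖),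
      mul_le_mul_of_nonneg_left hc2 (by linarith [hεpos k] : (0:ℝ) ≤ 3 * ε k)]
  have h2 : Tendsto (fun k => (‖x (k + 1) - xstar‖ / ‖x k - xstar‖) ^ 2)
      atTop (𝓝 0) := by
    apply squeeze_zero' (Eventually.of_forall fun k => by positivity)
      (hev.mono fun k hk => key k hk)
    have : Tendsto (fun k => 18 * ε k / σ) atTop (𝓝 (18 * 0 / σ)) :=
      (hεto.const_mul 18).div_const σ
    simpa using this
  have hr : Tendsto (fun k => ‖x (k + 1) - xstar‖ / ‖x k - xstar‖)
      atTop (𝓝 0) := by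
    have hcomp := (Real.continuous_sqrt.tendsto 0).comp h2
    have heq : ∀ k, Real.sqrt ((‖x (k + 1) - xstar‖ / ‖x k - xstar‖) ^ 2) =
        ‖x (k + 1) - xstar‖ / ‖x k - xstar‖ := fun k =>
      Real.sqrt_sq (by positivity)
    simpa [Function.comp_def, heq, Real.sqrt_zero] using hcomp
  refine ⟨hr, ?_⟩
  have hhalf : ∀ᶠ k in atTop,
      ‖‖x (k + 1) - xstar‖‖ ≤ (1 / 2) * ‖‖x k - xstar‖‖ := by
    filter_upwards [hr.eventually_lt_const (by norm_num : (0:ℝ) < 1 / 2)]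
      with k hk
    have := (div_lt_iff₀ (hb k)).mp hk
    rw [Real.norm_of_nonneg (norm_nonneg _), Real.norm_of_nonneg (norm_nonneg _)]
    linarith
  have hs : Summable (fun k => ‖x k - xstar‖) :=
    summable_of_ratio_norm_eventually_le (by norm_num) hhalf
  have h0 : Tendsto (fun k => ‖x k - xstar‖) atTop (𝓝 0) :=
    hs.tendsto_atTop_zero
  exact tendsto_iff_norm_sub_tendsto_zero.mpr h0

end
end
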